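/- arXiv:2603.20943 — 6 statements merged into one kernel-verified Lean document; each statement's English description precedes it below -/
import Mathlib

section
/- Let Q = [x₁⁻,x₁⁺] × ⋯ × [x_d⁻,x_d⁺] be an axis-parallel box in ℝ^d whose minimal corner (x₁⁻,…,x_d⁻) satisfies 1 + δ(i−1) ≤ x₁⁻ + ⋯ + x_d⁻ ≤ 1 + δ·i for some δ > 0 and integer i. Then the (d−1)-dimensional volume of the intersection of Q with the hyperplane H = {x : x₁ + ⋯ + x_d = 1 + δ·i} is at most c_d · δ^{d−1}, where c_d depends only on d. -/
open MeasureTheory Set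
open scoped NNReal ENNReal

/-- If the minimal corner of an axis-parallel box has coordinate sum between `1 + δ(i−1)` and
`1 + δ·i`, then the `(d−1)`-dimensional Hausdorff measure of the slice of the box by the
hyperplane `{x : ∑ x = 1 + δ·i}` is at most `c_d · δ^(d−1)`. -/
theorem stmt2 (d : ℕ) :
    ∃ c : ℝ, 0 < c ∧
      ∀ (δ : ℝ), 0 < δ → ∀ (i : ℕ) (a b : Fin d → ℝ), (∀ k, a k ≤ b k) →
        1 + δ * ((i : ℝ) - 1) ≤ ∑ k, a k → ∑ k, a k ≤ 1 + δ * (i : ℝ) →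
        MeasureTheory.Measure.hausdorffMeasure ((d : ℝ) - 1)
          ({x : EuclideanSpace ℝ (Fin d) | ∑ k, x k = 1 + δ * (i : ℝ)} ∩
            {x : EuclideanSpace ℝ (Fin d) | ∀ k, x k ∈ Set.Icc (a k) (b k)})
          ≤ ENNReal.ofReal (c * δ ^ (d - 1)) := by
  refine ⟨(((d : ℝ) ^ 2) ^ (d - 1)) + 1, by positivity, ?_⟩
  intro δ hδ i a b hab hlow hhigh
  rcases Nat.eq_zero_or_pos d with hd | hd
  · subst hd
    have hempty : ({x : EuclideanSpace ℝ (Fin 0) | ∑ k, x k = 1 + δ * (i : ℝ)} ∩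
        {x : EuclideanSpace ℝ (Fin 0) | ∀ k, x k ∈ Set.Icc (a k) (b k)}) = ∅ := by
      ext x
      simp only [mem_inter_iff, mem_setOf_eq, mem_empty_iff_false, iff_false, not_and]
      intro hx
      exfalso
      have : (0:ℝ) ≤ δ * i := by positivity
      simp only [Finset.univ_eq_empty, Finset.sum_empty] at hx
      linarith
    rw [hempty, measure_empty]
    exact zero_le
  obtain ⟨n, rfl⟩ : ∃ n, d = n + 1 := ⟨d - 1, (Nat.succ_pred_eq_of_pos hd).symm⟩
  set c₀ : ℝ := 1 + δ * (i : ℝ) with hc₀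
  set S : Set (EuclideanSpace ℝ (Fin (n + 1))) :=
    ({x : EuclideanSpace ℝ (Fin (n+1)) | ∑ k, x k = 1 + δ * (i : ℝ)} ∩
      {x : EuclideanSpace ℝ (Fin (n+1)) | ∀ k, x k ∈ Set.Icc (a k) (b k)}) with hS
  set F : (Fin n → ℝ) → EuclideanSpace ℝ (Fin (n + 1)) :=
    fun y => WithLp.toLp 2 (Fin.snoc (α := fun _ => ℝ) y (c₀ - ∑ k, y k)) with hF
  set T : Set (Fin n → ℝ) :=
    Set.pi Set.univ (fun k : Fin n => Icc (a k.castSucc) (a k.castSucc + δ)) with hT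
  -- every point of the slice has all coordinates in [a j, a j + δ]
  have hup : ∀ x ∈ S, ∀ j, x j ≤ a j + δ := by
    intro x hx j
    obtain ⟨hxH, hxQ⟩ := hx
    have hxH' : ∑ k, x k = c₀ := hxH
    have h1 : ∑ l ∈ Finset.univ.erase j, x l = c₀ - x j := by
      rw [Finset.sum_erase_eq_sub (Finset.mem_univ j), hxH']
    have h2 : ∑ l ∈ Finset.univ.erase j, a l = (∑ l, a l) - a j := by
      rw [Finset.sum_erase_eq_sub (Finset.mem_univ j)]
    have h3 : ∑ l ∈ Finset.univ.erase j, a l ≤ ∑ l ∈ Finset.univ.erase j, x l :=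
      Finset.sum_le_sum fun l _ => (hxQ l).1
    have := hlow
    rw [h1, h2] at h3
    simp only [hc₀] at *
    linarith
  -- the slice is contained in the image of a small cube
  have hsub : S ⊆ F '' T := by
    intro x hx
    refine ⟨Fin.init x, ?_, ?_⟩
    · intro k _
      exact ⟨(hx.2 k.castSucc).1, hup x hx k.castSucc⟩
    · have hxH : ∑ k, x k = c₀ := hx.1
      have hsum : ∑ k : Fin n, Fin.init x k = ∑ k : Fin n, x k.castSucc := rfl
      have hlast : c₀ - ∑ k : Fin n, Fin.init x k = x (Fin.last n) := by
        rw [hsum]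
        have := Fin.sum_univ_castSucc (fun k => x k)
        rw [this] at hxH
        linarith
      show WithLp.toLp 2 (Fin.snoc (α := fun _ => ℝ) (Fin.init x) (c₀ - ∑ k : Fin n, Fin.init x k)) = x
      rw [hlast]
      rw [Fin.snoc_init_self]
  -- F is Lipschitz with constant (n+1)^2
  set K : ℝ≥0 := ((n : ℝ≥0) + 1) ^ 2 with hK
  have hKcoe : ((K : ℝ≥0) : ℝ) = ((n : ℝ) + 1) ^ 2 := by push_cast [hK]; ring
  have hFlip : LipschitzWith K F := by
    apply LipschitzWith.of_dist_le_mul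
    intro y z
    have hD : (0:ℝ) ≤ dist y z := dist_nonneg
    have hcoord : ∀ j : Fin (n+1), dist (F y j) (F z j) ≤ ((n:ℝ) + 1) * dist y z := by
      intro j
      induction j using Fin.lastCases with
      | last =>
        have h1 : F y (Fin.last n) = c₀ - ∑ k, y k :=
          Fin.snoc_last (α := fun _ => ℝ) _ _
        have h2 : F z (Fin.last n) = c₀ - ∑ k, z k :=
          Fin.snoc_last (α := fun _ => ℝ) _ _
        rw [h1, h2, Real.dist_eq]
        have : c₀ - ∑ k, y k - (c₀ - ∑ k, z k) = ∑ k, (z k - y k) := by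
          rw [Finset.sum_sub_distrib]; ring
        rw [this]
        calc |∑ k, (z k - y k)| ≤ ∑ k, |z k - y k| := Finset.abs_sum_le_sum_abs _ _
          _ ≤ ∑ _k : Fin n, dist y z := by
              refine Finset.sum_le_sum fun k _ => ?_
              rw [abs_sub_comm, ← Real.dist_eq]
              exact dist_le_pi_dist y z k
          _ = (n : ℝ) * dist y z := by simp [mul_comm]
          _ ≤ ((n:ℝ) + 1) * dist y z := by nlinarith
      | cast k =>
        have h1 : F y k.castSucc = y k := Fin.snoc_castSucc (α := fun _ => ℝ) _ _ k
        have h2 : F z k.castSucc = z k := Fin.snoc_castSucc (α := fun _ => ℝ) _ _ k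
        rw [h1, h2]
        calc dist (y k) (z k) ≤ dist y z := dist_le_pi_dist y z k
          _ ≤ ((n:ℝ) + 1) * dist y z := by nlinarith
    rw [EuclideanSpace.dist_eq]
    have hsumle : ∑ j, dist (F y j) (F z j) ^ 2 ≤ ((K : ℝ) * dist y z) ^ 2 := by
      calc ∑ j, dist (F y j) (F z j) ^ 2
          ≤ ∑ _j : Fin (n+1), (((n:ℝ) + 1) * dist y z) ^ 2 := by
            refine Finset.sum_le_sum fun j _ => ?_
            exact pow_le_pow_left₀ dist_nonneg (hcoord j) 2
        _ = ((n:ℝ) + 1) * (((n:ℝ) + 1) * dist y z) ^ 2 := by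
            rw [Finset.sum_const]
            simp [Finset.card_univ]
        _ ≤ ((K : ℝ) * dist y z) ^ 2 := by
            rw [hKcoe]
            have : (0:ℝ) ≤ (n:ℝ) + 1 := by positivity
            nlinarith
    calc Real.sqrt (∑ j, dist (F y j) (F z j) ^ 2)
        ≤ Real.sqrt (((K : ℝ) * dist y z) ^ 2) := Real.sqrt_le_sqrt hsumle
      _ = (K : ℝ) * dist y z := Real.sqrt_sq (mul_nonneg K.coe_nonneg dist_nonneg)
  -- exponent rewriting
  have hexp : ((n + 1 : ℕ) : ℝ) - 1 = (n : ℝ) := by push_cast; ring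
  have hcard : ((n : ℝ)) = ((Fintype.card (Fin n) : ℕ) : ℝ) := by simp
  -- measure of T
  have hTmeas : μH[(n : ℝ)] T ≤ ENNReal.ofReal (δ ^ n) := by
    rw [hcard, hausdorffMeasure_pi_real, hT, volume_pi_pi]
    simp only [Real.volume_Icc, add_sub_cancel_left]
    rw [Finset.prod_const, ← ENNReal.ofReal_pow hδ.le]
    simp
  have hbound := hFlip.hausdorffMeasure_image_le (d := (n : ℝ)) (Nat.cast_nonneg n) T
  calc μH[((n + 1 : ℕ) : ℝ) - 1] S
      = μH[(n : ℝ)] S := by rw [hexp]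
    _ ≤ μH[(n : ℝ)] (F '' T) := measure_mono hsub
    _ ≤ (K : ℝ≥0∞) ^ (n : ℝ) * μH[(n : ℝ)] T := hbound
    _ ≤ (K : ℝ≥0∞) ^ (n : ℝ) * ENNReal.ofReal (δ ^ n) := by
        exact mul_le_mul_right hTmeas _
    _ = ENNReal.ofReal (((K : ℝ)) ^ n * δ ^ n) := by
        rw [ENNReal.rpow_natCast, ← ENNReal.ofReal_coe_nnreal,
          ← ENNReal.ofReal_pow (by positivity), ← ENNReal.ofReal_mul (by positivity)]
    _ ≤ ENNReal.ofReal (((((n + 1 : ℕ) : ℝ) ^ 2) ^ (n + 1 - 1) + 1) * δ ^ (n + 1 - 1)) := by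
        apply ENNReal.ofReal_le_ofReal
        have h1 : (K : ℝ) ^ n ≤ (((n + 1 : ℕ) : ℝ) ^ 2) ^ n + 1 := by
          rw [hKcoe]
          push_cast
          nlinarith [pow_nonneg (by positivity : (0:ℝ) ≤ ((n:ℝ)+1)^2) n]
        have h2 : (0:ℝ) ≤ δ ^ n := by positivity
        simp only [Nat.add_sub_cancel]
        nlinarith
end

section
/- Let P be a nonempty finite set of points in [0,1]^d and, for each vector v ∈ {−1,1}^d, let O_v be the orthant {x ∈ ℝ^d : x_i·v_i ≥ 0 for all i} and define CH_v(P) = (conv(P) + O_{−v}) ∩ [0,1]^d (Minkowski sum). Then conv(P) equals the intersection over all v ∈ {−1,1}^d of CH_v(P). -/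
open Set Pointwise

/-- `conv(P)` equals the intersection over all sign vectors `v ∈ {−1,1}^d` of
`CH_v(P) = (conv(P) + O_{−v}) ∩ [0,1]^d`, for a nonempty finite `P ⊆ [0,1]^d`. -/
theorem stmt5 (d : ℕ) (P : Set (EuclideanSpace ℝ (Fin d))) (hne : P.Nonempty)
    (hfin : P.Finite)
    (hsub : P ⊆ {x : EuclideanSpace ℝ (Fin d) | ∀ i, x i ∈ Set.Icc (0:ℝ) 1}) :
    convexHull ℝ P =
      ⋂ v ∈ {v : Fin d → ℝ | ∀ i, v i = 1 ∨ v i = -1},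
        ((convexHull ℝ P + {x : EuclideanSpace ℝ (Fin d) | ∀ i, 0 ≤ x i * (-(v i))}) ∩
          {x : EuclideanSpace ℝ (Fin d) | ∀ i, x i ∈ Set.Icc (0:ℝ) 1}) := by
  have hcube : convexHull ℝ P ⊆ {x : EuclideanSpace ℝ (Fin d) | ∀ i, x i ∈ Set.Icc (0:ℝ) 1} := by
    apply convexHull_min hsub
    intro a ha b hb s t hs ht hst i
    have := (convex_Icc (0:ℝ) 1) (ha i) (hb i) hs ht hst
    simpa using this
  apply Set.Subset.antisymm
  · intro x hx
    refine Set.mem_iInter₂.mpr fun v hv => ⟨?_, hcube hx⟩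
    exact ⟨x, hx, 0, fun i => by simp, by simp⟩
  · intro u hu
    by_contra hu'
    have hcompact : IsCompact (convexHull ℝ P) := hfin.isCompact_convexHull ℝ
    have hconv : Convex ℝ (convexHull ℝ P) := convex_convexHull ℝ P
    have hne' : (convexHull ℝ P).Nonempty := hne.mono (subset_convexHull ℝ P)
    obtain ⟨p, hp, hpmin⟩ := exists_norm_eq_iInf_of_complete_convex hne'
      hcompact.isClosed.isComplete hconv u
    have hproj := (norm_eq_iInf_iff_real_inner_le_zero hconv hp).mp hpmin
    set v : Fin d → ℝ := fun i => if 0 ≤ (u - p) i then 1 else -1 with hvdef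
    have hvmem : v ∈ {v : Fin d → ℝ | ∀ i, v i = 1 ∨ v i = -1} := by
      intro i
      by_cases h : 0 ≤ (u - p) i
      · exact Or.inl (if_pos h)
      · exact Or.inr (if_neg h)
    obtain ⟨⟨q, hq, w, hw, hsum⟩, _⟩ := Set.mem_iInter₂.mp hu v hvmem
    have hsum' : q + w = u := hsum
    have hwq : w = u - q := eq_sub_of_add_eq' hsum'
    have key : (inner ℝ (u - p) (u - q) : ℝ) ≤ 0 := by
      rw [PiLp.inner_apply]
      apply Finset.sum_nonpos
      intro i _
      have huq : (u - q) i = w i := by rw [hwq]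
      simp only [RCLike.inner_apply, starRingEnd_apply, star_trivial, huq]
      by_cases h : 0 ≤ (u - p) i
      · have hv1 : v i = 1 := if_pos h
        have := hw i
        rw [hv1] at this
        have hwle : w i ≤ 0 := by nlinarith
        exact mul_nonpos_of_nonpos_of_nonneg hwle h
      · have hv1 : v i = -1 := if_neg h
        have := hw i
        rw [hv1] at this
        have hwge : 0 ≤ w i := by nlinarith
        exact mul_nonpos_of_nonneg_of_nonpos hwge (le_of_not_ge h)
    have hsplit : (inner ℝ (u - p) (u - p) : ℝ)
        = (inner ℝ (u - p) (u - q) : ℝ) + (inner ℝ (u - p) (q - p) : ℝ) := by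
      rw [← inner_add_right]
      exact congrArg _ (sub_add_sub_cancel u q p).symm
    have hle : (inner ℝ (u - p) (u - p) : ℝ) ≤ 0 := by
      rw [hsplit]
      have := hproj q hq
      linarith
    have : u - p = 0 := real_inner_self_nonpos.mp hle
    exact hu' (by rw [sub_eq_zero] at this; rw [this]; exact hp)
end

section
/- Suppose an algorithm subdividing [0,1]^d into dyadic cubes produces, at level i, a collection 𝓡 of pairwise interior-disjoint dyadic cubes of side length 2^{−i}. For any convex body C ⊆ ℝ^d, the number of cubes of 𝓡 whose boundary intersects the boundary of C on a fixed axis-parallel hyperplane section is controlled by the (d−1)-dimensional instance of the same bound, leading to: the number of cubes in the full dyadic grid of side 2^{−i} in [0,1]^d intersecting ∂C is at most c_d · 2^{i(d−1)} for a constant c_d depending only on d. -/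
open Set Finset

lemma linmap_eq_sum {d : ℕ} (f : (Fin d → ℝ) →ₗ[ℝ] ℝ) (z : Fin d → ℝ) :
    f z = ∑ k, (f fun j => if k = j then 1 else 0) * z k := by
  rw [LinearMap.pi_apply_eq_sum_univ f z]
  exact Finset.sum_congr rfl fun k _ => by rw [smul_eq_mul, mul_comm]

/-- Every frontier point of a closed convex set admits a supporting functional. -/
lemma exists_support {d : ℕ} {C : Set (Fin d → ℝ)} (hC : Convex ℝ C) (hcl : IsClosed C)
    {x : Fin d → ℝ} (hx : x ∈ frontier C) :
    ∃ ν : Fin d → ℝ, ν ≠ 0 ∧ ∀ y ∈ C, ∑ k, ν k * y k ≤ ∑ k, ν k * x k := by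
  have hxC : x ∈ C := hcl.frontier_subset hx
  by_cases hint : (interior C).Nonempty
  · obtain ⟨f, hf⟩ := geometric_hahn_banach_open_point hC.interior isOpen_interior
      (hx.2 : x ∉ interior C)
    obtain ⟨a, ha⟩ := hint
    refine ⟨fun k => f fun j => if k = j then 1 else 0, ?_, ?_⟩
    · intro h0
      have hz : ∀ z, f z = 0 := by
        intro z
        have := linmap_eq_sum (f : (Fin d → ℝ) →ₗ[ℝ] ℝ) z
        simp only [ContinuousLinearMap.coe_coe] at this
        rw [this]
        simp [funext_iff.1 h0]
      have := hf a ha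
      rw [hz a, hz x] at this; exact lt_irrefl _ this
    · intro y hy
      have key : f y ≤ f x := by
        by_contra hlt
        push_neg at hlt
        have hfa : f a < f x := hf a ha
        set t : ℝ := (f y - f x) / (2 * (f y - f a)) with ht
        have h1 : f a < f y := lt_trans hfa hlt
        have htpos : 0 < t := by
          apply div_pos (by linarith) (by linarith)
        have ht1 : t < 1 := by
          rw [div_lt_one (by linarith)]; linarith
        have hmem : t • a + (1 - t) • y ∈ interior C :=
          hC.combo_interior_self_mem_interior ha hy htpos (by linarith) (by ring)
        have := hf _ hmem
        rw [map_add, map_smul, map_smul] at this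
        simp only [smul_eq_mul] at this
        have h2 : 0 < f y - f a := by linarith
        have htv : t * f y - t * f a = (f y - f x) / 2 := by
          rw [ht]; field_simp
        have expand : t * f a + (1 - t) * f y = f y - (t * f y - t * f a) := by ring
        rw [expand, htv] at this
        linarith
      calc ∑ k, (f fun j => if k = j then 1 else 0) * y k = f y := (linmap_eq_sum _ y).symm
        _ ≤ f x := key
        _ = ∑ k, (f fun j => if k = j then 1 else 0) * x k := linmap_eq_sum _ x
  · have hne : C.Nonempty := ⟨x, hxC⟩
    have hspan : affineSpan ℝ C ≠ ⊤ := fun h =>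
      hint (hC.interior_nonempty_iff_affineSpan_eq_top.2 h)
    have hdir : (affineSpan ℝ C).direction ≠ ⊤ := by
      intro h
      exact hspan ((AffineSubspace.direction_eq_top_iff_of_nonempty
        ((affineSpan_nonempty ℝ).2 hne)).1 h)
    obtain ⟨f, hf0, hfmap⟩ := Submodule.exists_dual_map_eq_bot_of_lt_top
      (lt_top_iff_ne_top.2 hdir) inferInstance
    refine ⟨fun k => f fun j => if k = j then 1 else 0, ?_, ?_⟩
    · intro h0
      apply hf0
      apply LinearMap.ext; intro z
      rw [linmap_eq_sum f z]
      simp [funext_iff.1 h0]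
    · intro y hy
      have hyx : y - x ∈ (affineSpan ℝ C).direction := by
        have := AffineSubspace.vsub_mem_direction (subset_affineSpan ℝ C hy)
          (subset_affineSpan ℝ C hxC)
        simpa [vsub_eq_sub] using this
      have : f (y - x) = 0 := by
        have : f (y - x) ∈ Submodule.map f (affineSpan ℝ C).direction :=
          Submodule.mem_map_of_mem hyx
        rw [hfmap] at this
        simpa using this
      have heq : f y = f x := by
        have := this; rw [map_sub] at this; linarith
      rw [← linmap_eq_sum f y, ← linmap_eq_sum f x, heq]

/-- One-sided Cauchy–Schwarz estimate for a supporting functional with dominating `j`-th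
coordinate. -/
lemma one_sided {d : ℕ} (hd : 0 < d) {ν x x' : Fin d → ℝ} {j : Fin d} {δ : ℝ} (hδ : 0 ≤ δ)
    (hsup : ∑ k, ν k * x' k ≤ ∑ k, ν k * x k)
    (hmax : ∀ k, ν k ^ 2 ≤ ν j ^ 2)
    (hclose : ∀ l, l ≠ j → |x l - x' l| ≤ δ) :
    ν j * (x' j - x j) ≤ ((d : ℝ) - 1) * |ν j| * δ := by
  have hd1 : (1 : ℝ) ≤ (d : ℝ) := by exact_mod_cast hd
  set A := ∑ k ∈ Finset.univ.erase j, ν k * (x k - x' k) with hA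
  have hsplit : ν j * (x j - x' j) + A = ∑ k, ν k * (x k - x' k) := by
    rw [hA]
    exact Finset.add_sum_erase _ (fun k => ν k * (x k - x' k)) (Finset.mem_univ j)
  have h0 : 0 ≤ ∑ k, ν k * (x k - x' k) := by
    have he : ∑ k, ν k * (x k - x' k) = (∑ k, ν k * x k) - ∑ k, ν k * x' k := by
      rw [← Finset.sum_sub_distrib]
      exact Finset.sum_congr rfl fun k _ => by ring
    rw [he]; linarith
  have hcard : ((Finset.univ.erase j).card : ℝ) = (d : ℝ) - 1 := by
    rw [Finset.card_erase_of_mem (Finset.mem_univ j)]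
    simp only [Finset.card_univ, Fintype.card_fin]
    rw [Nat.cast_sub hd]; norm_num
  have h1 : ∑ k ∈ Finset.univ.erase j, ν k ^ 2 ≤ ((d : ℝ) - 1) * ν j ^ 2 := by
    calc ∑ k ∈ Finset.univ.erase j, ν k ^ 2
        ≤ (Finset.univ.erase j).card • (ν j ^ 2) :=
          Finset.sum_le_card_nsmul _ _ _ fun k _ => hmax k
      _ = ((Finset.univ.erase j).card : ℝ) * ν j ^ 2 := by rw [nsmul_eq_mul]
      _ = ((d : ℝ) - 1) * ν j ^ 2 := by rw [hcard]
  have h2 : ∑ k ∈ Finset.univ.erase j, (x k - x' k) ^ 2 ≤ ((d : ℝ) - 1) * δ ^ 2 := by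
    calc ∑ k ∈ Finset.univ.erase j, (x k - x' k) ^ 2
        ≤ (Finset.univ.erase j).card • (δ ^ 2) := by
          refine Finset.sum_le_card_nsmul _ _ _ fun k hk => ?_
          have hk' : k ≠ j := (Finset.mem_erase.1 hk).1
          have := abs_le.1 (hclose k hk')
          exact sq_le_sq' (by linarith [this.1]) this.2
      _ = ((Finset.univ.erase j).card : ℝ) * δ ^ 2 := by rw [nsmul_eq_mul]
      _ = ((d : ℝ) - 1) * δ ^ 2 := by rw [hcard]
  have hCS : A ^ 2 ≤ (∑ k ∈ Finset.univ.erase j, ν k ^ 2) *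
      (∑ k ∈ Finset.univ.erase j, (x k - x' k) ^ 2) :=
    Finset.sum_mul_sq_le_sq_mul_sq _ _ _
  have hBnn : 0 ≤ ((d : ℝ) - 1) * |ν j| * δ := by
    apply mul_nonneg (mul_nonneg (by linarith) (abs_nonneg _)) hδ
  have hsq : A ^ 2 ≤ (((d : ℝ) - 1) * |ν j| * δ) ^ 2 := by
    have hn2 : (0:ℝ) ≤ ∑ k ∈ Finset.univ.erase j, (x k - x' k) ^ 2 :=
      Finset.sum_nonneg fun k _ => sq_nonneg _
    have := hCS.trans (mul_le_mul h1 h2 hn2 (by nlinarith))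
    calc A ^ 2 ≤ (((d : ℝ) - 1) * ν j ^ 2) * (((d : ℝ) - 1) * δ ^ 2) := this
      _ = (((d : ℝ) - 1) * |ν j| * δ) ^ 2 := by
          rw [mul_pow, mul_pow, sq_abs]; ring
  have hAB : A ≤ ((d : ℝ) - 1) * |ν j| * δ := by nlinarith [hsq, hBnn]
  have hre : ν j * (x' j - x j) = -(ν j * (x j - x' j)) := by ring
  linarith [hsplit, h0, hAB, hre.le, hre.ge]

/-- In the "graph class" `Γ_{j,s}`, the `j`-th coordinates of two points close in all other
coordinates satisfy a one-sided Lipschitz bound. -/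
lemma upper_bound {d : ℕ} (hd : 0 < d) {C : Set (Fin d → ℝ)} {j : Fin d} {s : Bool} {δ : ℝ}
    (hδ : 0 ≤ δ) {x x' ν ν' : Fin d → ℝ}
    (hxC : x ∈ C) (hx'C : x' ∈ C)
    (hsupν : ∀ y ∈ C, ∑ k, ν k * y k ≤ ∑ k, ν k * x k)
    (hsupν' : ∀ y ∈ C, ∑ k, ν' k * y k ≤ ∑ k, ν' k * x' k)
    (hmax : ∀ k, ν k ^ 2 ≤ ν j ^ 2) (hmax' : ∀ k, ν' k ^ 2 ≤ ν' j ^ 2)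
    (hs : if s = true then 0 < ν j else ν j < 0)
    (hs' : if s = true then 0 < ν' j else ν' j < 0)
    (hclose : ∀ l, l ≠ j → |x l - x' l| ≤ δ) :
    x j - x' j ≤ ((d : ℝ) - 1) * δ := by
  cases s with
  | true =>
    have hsp : 0 < ν' j := by simpa using hs'
    have h := one_sided hd hδ (hsupν' x hxC) hmax'
      (fun l hl => by rw [abs_sub_comm]; exact hclose l hl)
    rw [abs_of_pos hsp] at h
    have h' : ν' j * (x j - x' j) ≤ ν' j * (((d : ℝ) - 1) * δ) := by
      calc ν' j * (x j - x' j) ≤ ((d : ℝ) - 1) * ν' j * δ := h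
        _ = ν' j * (((d : ℝ) - 1) * δ) := by ring
    exact (mul_le_mul_iff_right₀ hsp).1 h'
  | false =>
    have hsn : ν j < 0 := by simpa using hs
    have h := one_sided hd hδ (hsupν x' hx'C) hmax hclose
    rw [abs_of_neg hsn] at h
    have h' : ν j * (x' j - x j) ≤ ν j * (-(((d : ℝ) - 1) * δ)) := by
      calc ν j * (x' j - x j) ≤ ((d : ℝ) - 1) * -(ν j) * δ := h
        _ = ν j * (-(((d : ℝ) - 1) * δ)) := by ring
    have := (mul_le_mul_left_of_neg hsn).1 h'
    linarith

/-- The main counting lemma: at most `2d(2d+1)·(2^i)^{d-1}` dyadic cells of level `i` meet the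
frontier of a closed convex set. -/
lemma count_main {d : ℕ} (hd : 0 < d) (i : ℕ) (C : Set (Fin d → ℝ)) (hC : Convex ℝ C)
    (hcl : IsClosed C) :
    {k : Fin d → Fin (2 ^ i) |
        ({x : Fin d → ℝ | ∀ j, x j ∈
            Set.Icc ((k j : ℝ) / 2 ^ i) (((k j : ℝ) + 1) / 2 ^ i)} ∩
          frontier C).Nonempty}.ncard ≤ 2 * d * (2 * d + 1) * (2 ^ i) ^ (d - 1) := by
  classical
  set cellS : (Fin d → Fin (2 ^ i)) → Set (Fin d → ℝ) := fun k =>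
    {x : Fin d → ℝ | ∀ j, x j ∈
      Set.Icc ((k j : ℝ) / 2 ^ i) (((k j : ℝ) + 1) / 2 ^ i)} with hcellS
  set Γ : Fin d × Bool → Set (Fin d → ℝ) := fun p =>
    {x | x ∈ frontier C ∧ ∃ ν : Fin d → ℝ,
      (∀ y ∈ C, ∑ k, ν k * y k ≤ ∑ k, ν k * x k) ∧ (∀ k, ν k ^ 2 ≤ ν p.1 ^ 2) ∧
      (if p.2 = true then 0 < ν p.1 else ν p.1 < 0)} with hΓ
  have cover : ∀ x ∈ frontier C, ∃ p : Fin d × Bool, x ∈ Γ p := by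
    intro x hx
    obtain ⟨ν, hν0, hνsup⟩ := exists_support hC hcl hx
    obtain ⟨j, -, hj⟩ := Finset.exists_max_image Finset.univ (fun k => ν k ^ 2)
      ⟨⟨0, hd⟩, Finset.mem_univ _⟩
    have hjne : ν j ≠ 0 := by
      intro h
      apply hν0
      funext k
      have h1 := hj k (Finset.mem_univ k)
      rw [h] at h1
      have h2 : ν k ^ 2 = 0 := le_antisymm (by simpa using h1) (sq_nonneg _)
      exact (pow_eq_zero_iff two_ne_zero).1 h2
    rcases lt_or_gt_of_ne hjne with hneg | hpos
    · exact ⟨(j, false), hx, ν, hνsup, fun k => hj k (Finset.mem_univ k), by simpa using hneg⟩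
    · exact ⟨(j, true), hx, ν, hνsup, fun k => hj k (Finset.mem_univ k), by simpa using hpos⟩
  -- key step: two cells in the same column meeting the same Γ-class have close indices
  have hstep : ∀ (j : Fin d) (s : Bool) (k k' : Fin d → Fin (2 ^ i)),
      (∀ l, l ≠ j → k l = k' l) →
      (cellS k ∩ Γ (j, s)).Nonempty → (cellS k' ∩ Γ (j, s)).Nonempty →
      (k j : ℕ) ≤ (k' j : ℕ) + d := by
    intro j s k k' hagree ⟨x, hxcell, hxΓ⟩ ⟨x', hx'cell, hx'Γ⟩
    obtain ⟨hxF, ν, hsupν, hmaxν, hsν⟩ := hxΓ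
    obtain ⟨hx'F, ν', hsupν', hmaxν', hsν'⟩ := hx'Γ
    have hxC : x ∈ C := hcl.frontier_subset hxF
    have hx'C : x' ∈ C := hcl.frontier_subset hx'F
    have hpow : (0:ℝ) < (2:ℝ) ^ i := by positivity
    have hclose : ∀ l, l ≠ j → |x l - x' l| ≤ 1 / (2:ℝ) ^ i := by
      intro l hl
      have h1 := hxcell l
      have h2 := hx'cell l
      rw [hagree l hl] at h1
      have hw : ((k' l : ℝ) + 1) / 2 ^ i = (k' l : ℝ) / 2 ^ i + 1 / 2 ^ i := by ring
      rw [abs_le]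
      constructor
      · linarith [h1.1, h2.2, hw]
      · linarith [h1.2, h2.1, hw]
    have hub : x j - x' j ≤ ((d : ℝ) - 1) * (1 / (2:ℝ) ^ i) :=
      upper_bound hd (by positivity) hxC hx'C hsupν hsupν' hmaxν hmaxν' hsν hsν' hclose
    have e1 := (hxcell j).1
    have e2 := (hx'cell j).2
    have hreal : (k j : ℝ) ≤ (k' j : ℝ) + (d : ℝ) := by
      have h3 : (k j : ℝ) / 2 ^ i - ((k' j : ℝ) + 1) / 2 ^ i ≤ ((d : ℝ) - 1) * (1 / 2 ^ i) := by
        linarith [e1, e2, hub]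
      have h4 := mul_le_mul_of_nonneg_right h3 hpow.le
      have h5 : ((k j : ℝ) / 2 ^ i - ((k' j : ℝ) + 1) / 2 ^ i) * 2 ^ i
          = (k j : ℝ) - (k' j : ℝ) - 1 := by field_simp; ring
      have h6 : (((d : ℝ) - 1) * (1 / 2 ^ i)) * 2 ^ i = (d : ℝ) - 1 := by field_simp
      rw [h5, h6] at h4
      linarith
    exact_mod_cast hreal
  -- counting
  have hset : {k : Fin d → Fin (2 ^ i) | (cellS k ∩ frontier C).Nonempty} =
      ↑(Finset.univ.filter fun k => (cellS k ∩ frontier C).Nonempty) := by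
    ext k; simp
  rw [show {k : Fin d → Fin (2 ^ i) |
        ({x : Fin d → ℝ | ∀ j, x j ∈
            Set.Icc ((k j : ℝ) / 2 ^ i) (((k j : ℝ) + 1) / 2 ^ i)} ∩
          frontier C).Nonempty} =
      {k : Fin d → Fin (2 ^ i) | (cellS k ∩ frontier C).Nonempty} from rfl, hset,
    Set.ncard_coe_finset]
  set K : Finset (Fin d → Fin (2 ^ i)) :=
    Finset.univ.filter fun k => (cellS k ∩ frontier C).Nonempty with hK
  set Kp : Fin d × Bool → Finset (Fin d → Fin (2 ^ i)) := fun p =>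
    Finset.univ.filter fun k => (cellS k ∩ Γ p).Nonempty with hKp
  have hKsub : K ⊆ Finset.univ.biUnion Kp := by
    intro k hk
    rw [hK, Finset.mem_filter] at hk
    obtain ⟨x, hx1, hx2⟩ := hk.2
    obtain ⟨p, hp⟩ := cover x hx2
    refine Finset.mem_biUnion.2 ⟨p, Finset.mem_univ _, ?_⟩
    rw [hKp, Finset.mem_filter]
    exact ⟨Finset.mem_univ _, x, hx1, hp⟩
  have hcount : ∀ p : Fin d × Bool, (Kp p).card ≤ (2 * d + 1) * (2 ^ i) ^ (d - 1) := by
    rintro ⟨j, s⟩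
    set proj : (Fin d → Fin (2 ^ i)) → ({l : Fin d // l ≠ j} → Fin (2 ^ i)) :=
      fun k l => k l.1 with hproj
    have hfib : ∀ b ∈ (Kp (j, s)).image proj,
        ((Kp (j, s)).filter fun k => proj k = b).card ≤ 2 * d + 1 := by
      intro b hb
      obtain ⟨k₀, hk₀, hk₀b⟩ := Finset.mem_image.1 hb
      have hk₀mem : (cellS k₀ ∩ Γ (j, s)).Nonempty := by
        rw [hKp, Finset.mem_filter] at hk₀; exact hk₀.2
      have hmaps : ∀ kk ∈ (Kp (j, s)).filter fun k => proj k = b,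
          (kk j : ℕ) ∈ Finset.Icc ((k₀ j : ℕ) - d) ((k₀ j : ℕ) + d) := by
        intro kk hkk
        rw [Finset.mem_filter] at hkk
        obtain ⟨hkk1, hkk2⟩ := hkk
        rw [hKp, Finset.mem_filter] at hkk1
        have hkkmem : (cellS kk ∩ Γ (j, s)).Nonempty := hkk1.2
        have hagree : ∀ l, l ≠ j → kk l = k₀ l := by
          intro l hl
          have := congrFun (hkk2.trans hk₀b.symm) ⟨l, hl⟩
          exact this
        have hle1 : (kk j : ℕ) ≤ (k₀ j : ℕ) + d :=
          hstep j s kk k₀ hagree hkkmem hk₀mem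
        have hle2 : (k₀ j : ℕ) ≤ (kk j : ℕ) + d :=
          hstep j s k₀ kk (fun l hl => (hagree l hl).symm) hk₀mem hkkmem
        rw [Finset.mem_Icc]
        omega
      have hinj : Set.InjOn (fun kk : Fin d → Fin (2 ^ i) => (kk j : ℕ))
          ↑((Kp (j, s)).filter fun k => proj k = b) := by
        intro k1 h1 k2 h2 h12
        simp only [Finset.coe_filter, Set.mem_setOf_eq] at h1 h2
        funext l
        by_cases hl : l = j
        · subst hl; exact Fin.val_injective h12
        · have := congrFun (h1.2.trans h2.2.symm) ⟨l, hl⟩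
          exact this
      calc ((Kp (j, s)).filter fun k => proj k = b).card
          ≤ (Finset.Icc ((k₀ j : ℕ) - d) ((k₀ j : ℕ) + d)).card :=
            Finset.card_le_card_of_injOn _ hmaps hinj
        _ ≤ 2 * d + 1 := by rw [Nat.card_Icc]; omega
    have himg : ((Kp (j, s)).image proj).card ≤ (2 ^ i) ^ (d - 1) := by
      have h := Finset.card_le_univ ((Kp (j, s)).image proj)
      refine le_trans h (le_of_eq ?_)
      rw [Fintype.card_fun]
      have hsub : Fintype.card {l : Fin d // l ≠ j} = d - 1 := by
        have := Fintype.card_subtype_compl (fun l : Fin d => l = j)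
        simpa [Fintype.card_subtype_eq] using this
      rw [hsub, Fintype.card_fin]
    calc (Kp (j, s)).card ≤ (2 * d + 1) * ((Kp (j, s)).image proj).card :=
        Finset.card_le_mul_card_image _ _ hfib
      _ ≤ (2 * d + 1) * (2 ^ i) ^ (d - 1) := Nat.mul_le_mul_left _ himg
  calc K.card ≤ (Finset.univ.biUnion Kp).card := Finset.card_le_card hKsub
    _ ≤ ∑ p : Fin d × Bool, (Kp p).card := Finset.card_biUnion_le
    _ ≤ ∑ _p : Fin d × Bool, (2 * d + 1) * (2 ^ i) ^ (d - 1) :=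
        Finset.sum_le_sum fun p _ => hcount p
    _ = (2 * d) * ((2 * d + 1) * (2 ^ i) ^ (d - 1)) := by
        rw [Finset.sum_const, Finset.card_univ, Fintype.card_prod, Fintype.card_fin,
          Fintype.card_bool, smul_eq_mul]
        ring
    _ = 2 * d * (2 * d + 1) * (2 ^ i) ^ (d - 1) := by ring

/-- The number of cells of the dyadic grid of side `2^{−i}` on `[0,1]^d` whose intersection with
the boundary of a convex body `C` is nonempty is at most `c_d · 2^{i(d−1)}`, for a constant
`c_d` depending only on `d`. -/
theorem stmt10 (d : ℕ) :
    ∃ c : ℝ, 0 < c ∧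
      ∀ (i : ℕ) (C : Set (Fin d → ℝ)), Convex ℝ C → IsCompact C → C.Nonempty →
        ({k : Fin d → Fin (2 ^ i) |
            ({x : Fin d → ℝ | ∀ j, x j ∈
                Set.Icc ((k j : ℝ) / 2 ^ i) (((k j : ℝ) + 1) / 2 ^ i)} ∩
              frontier C).Nonempty}.ncard : ℝ) ≤ c * 2 ^ (i * (d - 1)) := by
  rcases Nat.eq_zero_or_pos d with hd0 | hd
  · subst hd0
    refine ⟨1, one_pos, ?_⟩
    intro i C hC hcomp hne
    have h1 : {k : Fin 0 → Fin (2 ^ i) |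
        ({x : Fin 0 → ℝ | ∀ j, x j ∈
            Set.Icc ((k j : ℝ) / 2 ^ i) (((k j : ℝ) + 1) / 2 ^ i)} ∩
          frontier C).Nonempty}.ncard ≤ 1 := by
      have h2 := Set.ncard_le_ncard (Set.subset_univ
        {k : Fin 0 → Fin (2 ^ i) |
          ({x : Fin 0 → ℝ | ∀ j, x j ∈
              Set.Icc ((k j : ℝ) / 2 ^ i) (((k j : ℝ) + 1) / 2 ^ i)} ∩
            frontier C).Nonempty}) Set.finite_univ
      have h3 : (Set.univ : Set (Fin 0 → Fin (2 ^ i))).ncard = 1 := by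
        rw [Set.ncard_univ]
        exact Nat.card_unique
      exact le_trans h2 (le_of_eq h3)
    have h4 : ((1 : ℕ) : ℝ) ≤ 1 * 2 ^ (i * (0 - 1)) := by norm_num
    exact le_trans (by exact_mod_cast h1) h4
  · refine ⟨2 * d * (2 * d + 1) + 1, by positivity, ?_⟩
    intro i C hC hcomp hne
    have h := count_main hd i C hC hcomp.isClosed
    refine le_trans (Nat.cast_le.2 h) ?_
    push_cast
    rw [← pow_mul]
    have hx : (0:ℝ) ≤ 2 ^ (i * (d - 1)) := by positivity
    nlinarith [hx]
end

section
/- Let C be a convex polygon contained in [0,1]² and let C' be a convex polygon obtained from C by translating each of its r supporting halfplanes outward by at most δ ∈ [0,1] (i.e., C = ∩ᵢ Hᵢ, C' = ∩ᵢ Hᵢ' with Hᵢ ⊆ Hᵢ' parallel and dist(∂Hᵢ,∂Hᵢ') ≤ δ). Then the area of (C' ∩ [0,1]²) \ C is at most K·δ for an absolute constant K (independent of r). -/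
open MeasureTheory Set

/-- 1D: the set of points of a convex `I ⊆ [0,1]` whose translate by `h` leaves `I`
has measure at most `|h|`. -/
lemma oneD_lemma (I : Set ℝ) (hI : Convex ℝ I) (hsub : I ⊆ Set.Icc 0 1) (h : ℝ) :
    volume {u : ℝ | u ∈ I ∧ u + h ∉ I} ≤ ENNReal.ofReal |h| := by
  rcases I.eq_empty_or_nonempty with hE | hne
  · simp [hE]
  rcases le_or_gt 0 h with hh | hh
  · have hb : BddAbove I := BddAbove.mono hsub bddAbove_Icc
    have hcont : {u : ℝ | u ∈ I ∧ u + h ∉ I} ⊆ Set.Icc (sSup I - h) (sSup I) := by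
      rintro u ⟨hu, hnu⟩
      refine ⟨?_, le_csSup hb hu⟩
      by_contra hlt
      push_neg at hlt
      obtain ⟨w, hw, hw2⟩ := exists_lt_of_lt_csSup hne (by linarith : u + h < sSup I)
      exact hnu (hI.ordConnected.out hu hw ⟨by linarith, le_of_lt hw2⟩)
    calc volume {u : ℝ | u ∈ I ∧ u + h ∉ I} ≤ volume (Set.Icc (sSup I - h) (sSup I)) :=
          measure_mono hcont
      _ = ENNReal.ofReal |h| := by
          rw [Real.volume_Icc, abs_of_nonneg hh, sub_sub_cancel]
  · have hb : BddBelow I := BddBelow.mono hsub bddBelow_Icc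
    have hcont : {u : ℝ | u ∈ I ∧ u + h ∉ I} ⊆ Set.Icc (sInf I) (sInf I - h) := by
      rintro u ⟨hu, hnu⟩
      refine ⟨csInf_le hb hu, ?_⟩
      by_contra hlt
      push_neg at hlt
      obtain ⟨w, hw, hw2⟩ := exists_lt_of_csInf_lt hne (by linarith : sInf I < u + h)
      exact hnu (hI.ordConnected.out hw hu ⟨le_of_lt hw2, by linarith⟩)
    calc volume {u : ℝ | u ∈ I ∧ u + h ∉ I} ≤ volume (Set.Icc (sInf I) (sInf I - h)) :=
          measure_mono hcont
      _ = ENNReal.ofReal |h| := by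
          rw [Real.volume_Icc, abs_of_neg hh]
          congr 1
          ring

/-- 2D, vertical translate version. -/
lemma plane_vert (A : Set (ℝ × ℝ)) (hA : MeasurableSet A) (hc : Convex ℝ A)
    (hsub : ∀ p ∈ A, p.1 ∈ Set.Icc (0:ℝ) 1 ∧ p.2 ∈ Set.Icc (0:ℝ) 1) (h : ℝ) :
    volume {p : ℝ × ℝ | p ∈ A ∧ p + (0, h) ∉ A} ≤ ENNReal.ofReal |h| := by
  have hS : MeasurableSet {p : ℝ × ℝ | p ∈ A ∧ p + (0, h) ∉ A} := by
    have he : {p : ℝ × ℝ | p ∈ A ∧ p + (0, h) ∉ A} = A ∩ (fun p => p + (0, h)) ⁻¹' Aᶜ := rfl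
    rw [he]
    exact hA.inter (hA.compl.preimage (measurable_add_const _))
  rw [Measure.volume_eq_prod, Measure.prod_apply hS]
  have key : ∀ s : ℝ, volume (Prod.mk s ⁻¹' {p : ℝ × ℝ | p ∈ A ∧ p + (0, h) ∉ A})
      ≤ Set.indicator (Set.Icc (0:ℝ) 1) (fun _ => ENNReal.ofReal |h|) s := by
    intro s
    rcases Classical.em (s ∈ Set.Icc (0:ℝ) 1) with hs | hs
    · rw [Set.indicator_of_mem hs]
      have heq : Prod.mk s ⁻¹' {p : ℝ × ℝ | p ∈ A ∧ p + (0, h) ∉ A}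
          = {u : ℝ | u ∈ {w : ℝ | (s, w) ∈ A} ∧ u + h ∉ {w : ℝ | (s, w) ∈ A}} := by
        ext u
        have he : ((s, u) : ℝ × ℝ) + (0, h) = (s, u + h) := by
          simp [Prod.ext_iff]
        simp only [Set.mem_preimage, Set.mem_setOf_eq, he]
      rw [heq]
      refine oneD_lemma _ ?_ ?_ h
      · intro u1 h1 u2 h2 a b ha hb hab
        have hmem := hc h1 h2 ha hb hab
        have e : a • ((s, u1) : ℝ × ℝ) + b • (s, u2) = (s, a • u1 + b • u2) := by
          have hs' : a * s + b * s = s := by rw [← add_mul, hab, one_mul]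
          simp [Prod.ext_iff, smul_eq_mul, hs']
        rw [e] at hmem
        exact hmem
      · intro u hu
        exact (hsub _ hu).2
    · rw [Set.indicator_of_notMem hs]
      have he : Prod.mk s ⁻¹' {p : ℝ × ℝ | p ∈ A ∧ p + (0, h) ∉ A} = ∅ := by
        ext u
        simp only [Set.mem_preimage, Set.mem_setOf_eq, Set.mem_empty_iff_false, iff_false,
          not_and]
        intro hu
        exact absurd (hsub _ hu).1 hs
      simp [he]
  calc ∫⁻ s, volume (Prod.mk s ⁻¹' {p : ℝ × ℝ | p ∈ A ∧ p + (0, h) ∉ A})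
      ≤ ∫⁻ s, Set.indicator (Set.Icc (0:ℝ) 1) (fun _ => ENNReal.ofReal |h|) s :=
        lintegral_mono key
    _ = ENNReal.ofReal |h| * volume (Set.Icc (0:ℝ) 1) := by
        rw [lintegral_indicator measurableSet_Icc, setLIntegral_const]
    _ ≤ ENNReal.ofReal |h| := by
        rw [Real.volume_Icc]
        simp

/-- 2D, horizontal translate version (by swapping coordinates). -/
lemma plane_hor (A : Set (ℝ × ℝ)) (hA : MeasurableSet A) (hc : Convex ℝ A)
    (hsub : ∀ p ∈ A, p.1 ∈ Set.Icc (0:ℝ) 1 ∧ p.2 ∈ Set.Icc (0:ℝ) 1) (h : ℝ) :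
    volume {p : ℝ × ℝ | p ∈ A ∧ p + (h, 0) ∉ A} ≤ ENNReal.ofReal |h| := by
  set A' : Set (ℝ × ℝ) := Prod.swap ⁻¹' A with hA'def
  have hA' : MeasurableSet A' := hA.preimage measurable_swap
  have hc' : Convex ℝ A' := by
    intro p hp q hq a b ha hb hab
    have hmem := hc hp hq ha hb hab
    have e : Prod.swap (a • p + b • q) = a • Prod.swap p + b • Prod.swap q := rfl
    show Prod.swap (a • p + b • q) ∈ A
    rw [e]
    exact hmem
  have hsub' : ∀ p ∈ A', p.1 ∈ Set.Icc (0:ℝ) 1 ∧ p.2 ∈ Set.Icc (0:ℝ) 1 := by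
    intro p hp
    exact ⟨(hsub _ hp).2, (hsub _ hp).1⟩
  have hT : MeasurableSet {q : ℝ × ℝ | q ∈ A' ∧ q + (0, h) ∉ A'} := by
    have he : {q : ℝ × ℝ | q ∈ A' ∧ q + (0, h) ∉ A'} = A' ∩ (fun q => q + (0, h)) ⁻¹' A'ᶜ := rfl
    rw [he]
    exact hA'.inter (hA'.compl.preimage (measurable_add_const _))
  have hset : {p : ℝ × ℝ | p ∈ A ∧ p + (h, 0) ∉ A}
      = Prod.swap ⁻¹' {q : ℝ × ℝ | q ∈ A' ∧ q + (0, h) ∉ A'} := by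
    ext p
    simp only [Set.mem_preimage, Set.mem_setOf_eq, hA'def, Prod.swap_swap]
    have he : Prod.swap p + ((0 : ℝ), h) = Prod.swap (p + (h, 0)) := by
      simp [Prod.ext_iff]
    rw [he, Prod.swap_swap]
  rw [hset]
  have hvol : volume (Prod.swap ⁻¹' {q : ℝ × ℝ | q ∈ A' ∧ q + (0, h) ∉ A'})
      = volume {q : ℝ × ℝ | q ∈ A' ∧ q + (0, h) ∉ A'} := by
    rw [Measure.volume_eq_prod]
    exact (Measure.measurePreserving_swap).measure_preimage hT.nullMeasurableSet
  rw [hvol]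
  exact plane_vert A' hA' hc' hsub' h

/-- Translating each supporting halfplane of a convex polygon `C ⊆ [0,1]²` outward by at most
`δ ∈ [0,1]` increases the region inside the unit square by area at most `K·δ`, for an absolute
constant `K` independent of the number of halfplanes. -/
theorem stmt13 :
    ∃ K : ℝ, 0 < K ∧
      ∀ (r : ℕ) (δ : ℝ), δ ∈ Set.Icc (0:ℝ) 1 →
        ∀ (v : Fin r → EuclideanSpace ℝ (Fin 2)), (∀ i, ‖v i‖ = 1) →
        ∀ (t t' : Fin r → ℝ), (∀ i, t i ≤ t' i) → (∀ i, t' i ≤ t i + δ) →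
        (⋂ i, {x : EuclideanSpace ℝ (Fin 2) | (inner ℝ x (v i) : ℝ) ≤ t i}) ⊆
          {x : EuclideanSpace ℝ (Fin 2) | ∀ j, x j ∈ Set.Icc (0:ℝ) 1} →
        volume (((⋂ i, {x : EuclideanSpace ℝ (Fin 2) | (inner ℝ x (v i) : ℝ) ≤ t' i}) ∩
            {x : EuclideanSpace ℝ (Fin 2) | ∀ j, x j ∈ Set.Icc (0:ℝ) 1}) \
          (⋂ i, {x : EuclideanSpace ℝ (Fin 2) | (inner ℝ x (v i) : ℝ) ≤ t i}))
          ≤ ENNReal.ofReal (K * δ) := by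
  refine ⟨8, by norm_num, ?_⟩
  intro r δ hδ v hv t t' htt' ht'δ hCQ
  obtain ⟨hδ0, hδ1⟩ := hδ
  set Q : Set (EuclideanSpace ℝ (Fin 2)) := {x | ∀ j, x j ∈ Set.Icc (0:ℝ) 1} with hQdef
  set C : Set (EuclideanSpace ℝ (Fin 2)) :=
    ⋂ i, {x : EuclideanSpace ℝ (Fin 2) | (inner ℝ x (v i) : ℝ) ≤ t i} with hCdef
  set C' : Set (EuclideanSpace ℝ (Fin 2)) :=
    ⋂ i, {x : EuclideanSpace ℝ (Fin 2) | (inner ℝ x (v i) : ℝ) ≤ t' i} with hC'def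
  set M : Set (EuclideanSpace ℝ (Fin 2)) := C' ∩ Q with hMdef
  -- the measurable equivalence to the plane
  set F : EuclideanSpace ℝ (Fin 2) ≃ᵐ ℝ × ℝ :=
    ((MeasurableEquiv.toLp 2 (Fin 2 → ℝ)).symm).trans (MeasurableEquiv.piFinTwo fun _ => ℝ)
    with hFdef
  have hFapp : ∀ x : EuclideanSpace ℝ (Fin 2), F x = (x 0, x 1) := fun _ => rfl
  have hF : MeasurePreserving (⇑F) volume volume := by
    have h1 := EuclideanSpace.volume_preserving_symm_measurableEquiv_toLp (Fin 2)
    have h2 := volume_preserving_piFinTwo (fun _ : Fin 2 => ℝ)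
    exact h2.comp h1
  -- measurability of M
  have hinner : ∀ w : EuclideanSpace ℝ (Fin 2),
      Measurable fun x : EuclideanSpace ℝ (Fin 2) => (inner ℝ x w : ℝ) :=
    fun w => (continuous_id.inner continuous_const).measurable
  have hC'meas : MeasurableSet C' :=
    MeasurableSet.iInter fun i => measurableSet_le (hinner (v i)) measurable_const
  have hQmeas : MeasurableSet Q := by
    have he : Q = ⋂ j : Fin 2, (fun x : EuclideanSpace ℝ (Fin 2) => x j) ⁻¹' Set.Icc (0:ℝ) 1 := by
      ext x
      simp [hQdef]
    rw [he]
    refine MeasurableSet.iInter fun j => measurableSet_Icc.preimage ?_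
    exact (measurable_pi_apply j).comp ((MeasurableEquiv.toLp 2 (Fin 2 → ℝ)).symm).measurable
  have hMmeas : MeasurableSet M := hC'meas.inter hQmeas
  -- convexity of M
  have hMconv : Convex ℝ M := by
    apply Convex.inter
    · refine convex_iInter fun i => ?_
      intro x hx y hy a b ha hb hab
      simp only [Set.mem_setOf_eq] at hx hy ⊢
      have he : (inner ℝ (a • x + b • y) (v i) : ℝ)
          = a * (inner ℝ x (v i) : ℝ) + b * (inner ℝ y (v i) : ℝ) := by
        rw [inner_add_left, real_inner_smul_left, real_inner_smul_left]
      rw [he]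
      calc a * (inner ℝ x (v i) : ℝ) + b * (inner ℝ y (v i) : ℝ)
          ≤ a * t' i + b * t' i :=
            add_le_add (mul_le_mul_of_nonneg_left hx ha) (mul_le_mul_of_nonneg_left hy hb)
        _ = t' i := by rw [← add_mul, hab, one_mul]
    · intro x hx y hy a b ha hb hab
      intro j
      have he : (a • x + b • y) j = a * x j + b * y j := by
        simp [PiLp.add_apply, PiLp.smul_apply, smul_eq_mul]
      rw [he]
      have := (convex_Icc (0:ℝ) 1) (hx j) (hy j) ha hb hab
      simpa [smul_eq_mul] using this
  -- linearity of F
  have hFlin : ∀ (x y : EuclideanSpace ℝ (Fin 2)) (a b : ℝ),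
      F (a • x + b • y) = a • F x + b • F y := by
    intro x y a b
    rw [hFapp, hFapp, hFapp]
    simp [Prod.ext_iff, PiLp.add_apply, PiLp.smul_apply, smul_eq_mul]
  -- the planar set A
  set A : Set (ℝ × ℝ) := ⇑F.symm ⁻¹' M with hAdef
  have hAmeas : MeasurableSet A := hMmeas.preimage F.symm.measurable
  have hmemA : ∀ x : EuclideanSpace ℝ (Fin 2), F x ∈ A ↔ x ∈ M := by
    intro x
    simp only [hAdef, Set.mem_preimage, F.symm_apply_apply]
  have hAconv : Convex ℝ A := by
    intro p hp q hq a b ha hb hab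
    show F.symm (a • p + b • q) ∈ M
    have e1 : a • p + b • q = F (a • F.symm p + b • F.symm q) := by
      rw [hFlin, F.apply_symm_apply, F.apply_symm_apply]
    rw [e1, F.symm_apply_apply]
    exact hMconv hp hq ha hb hab
  have hAsub : ∀ p ∈ A, p.1 ∈ Set.Icc (0:ℝ) 1 ∧ p.2 ∈ Set.Icc (0:ℝ) 1 := by
    intro p hp
    have hm : F.symm p ∈ M := hp
    have hq : F.symm p ∈ Q := hm.2
    have e : p = F (F.symm p) := (F.apply_symm_apply p).symm
    rw [e, hFapp]
    exact ⟨hq 0, hq 1⟩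
  -- translation formulas
  have hFadd : ∀ (x : EuclideanSpace ℝ (Fin 2)) (c : ℝ) (j : Fin 2),
      F (x + c • EuclideanSpace.single j 1) = F x + (if j = 0 then ((c:ℝ), (0:ℝ)) else (0, c)) := by
    intro x c j
    rw [hFapp, hFapp]
    fin_cases j <;>
      simp [Prod.ext_iff, PiLp.add_apply, PiLp.smul_apply, EuclideanSpace.single_apply,
        smul_eq_mul]
  -- the four bad sets
  set S1 : Set (ℝ × ℝ) := {p | p ∈ A ∧ p + (0, 2*δ) ∉ A} with hS1def
  set S2 : Set (ℝ × ℝ) := {p | p ∈ A ∧ p + (0, -(2*δ)) ∉ A} with hS2def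
  set S3 : Set (ℝ × ℝ) := {p | p ∈ A ∧ p + (2*δ, 0) ∉ A} with hS3def
  set S4 : Set (ℝ × ℝ) := {p | p ∈ A ∧ p + (-(2*δ), 0) ∉ A} with hS4def
  -- main containment
  have hDsub : (C' ∩ Q) \ C ⊆ ⇑F ⁻¹' (S1 ∪ S2 ∪ S3 ∪ S4) := by
    intro x hx
    obtain ⟨hxM, hxC⟩ := hx
    have hxM' : x ∈ M := hxM
    have hxA : F x ∈ A := (hmemA x).mpr hxM'
    have hexi : ∃ i, ¬ ((inner ℝ x (v i) : ℝ) ≤ t i) := by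
      by_contra hcon
      push_neg at hcon
      exact hxC (Set.mem_iInter.mpr fun i => hcon i)
    obtain ⟨i, hi⟩ := hexi
    push_neg at hi
    -- sum of squares of the unit normal
    have hsum : (v i 0)^2 + (v i 1)^2 = 1 := by
      have h1 : Real.sqrt (∑ k : Fin 2, ‖v i k‖^2) = 1 := by
        rw [← EuclideanSpace.norm_eq]
        exact hv i
      have h2 : (∑ k : Fin 2, ‖v i k‖^2) = 1 := by
        have hnn : (0:ℝ) ≤ ∑ k : Fin 2, ‖v i k‖^2 :=
          Finset.sum_nonneg fun k _ => sq_nonneg _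
        nlinarith [Real.sq_sqrt hnn]
      simpa [Fin.sum_univ_two, Real.norm_eq_abs, sq_abs] using h2
    have hcase : (1/2 ≤ (v i 0)^2) ∨ (1/2 ≤ (v i 1)^2) := by
      by_contra hcon
      push_neg at hcon
      nlinarith [hcon.1, hcon.2]
    -- key: suitable translates leave M
    have key : ∀ (j : Fin 2) (c : ℝ), δ ≤ c * (v i j) →
        x + c • EuclideanSpace.single j 1 ∉ M := by
      intro j c hc hy
      have hyC' : x + c • EuclideanSpace.single j 1 ∈ C' := hy.1
      have h2 : (inner ℝ (x + c • EuclideanSpace.single j 1) (v i) : ℝ) ≤ t' i :=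
        Set.mem_iInter.mp hyC' i
      have h3 : (inner ℝ (x + c • EuclideanSpace.single j 1) (v i) : ℝ)
          = (inner ℝ x (v i) : ℝ) + c * (v i j) := by
        rw [inner_add_left, real_inner_smul_left, EuclideanSpace.inner_single_left]
        norm_num
      have h4 := ht'δ i
      rw [h3] at h2
      linarith
    -- four cases
    have hmain : F x ∈ S1 ∪ S2 ∪ S3 ∪ S4 := by
      rcases hcase with h0 | h1
      · rcases le_or_gt 0 (v i 0) with hsg | hsg
        · -- right
          have hge : δ ≤ (2*δ) * (v i 0) := by nlinarith
          have hnm := key 0 (2*δ) hge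
          refine Set.mem_union_left _ (Set.mem_union_right _ ⟨hxA, fun hmem => ?_⟩)
          have he : F x + ((2*δ : ℝ), (0:ℝ)) = F (x + (2*δ) • EuclideanSpace.single 0 1) := by
            rw [hFadd]
            norm_num
          rw [he] at hmem
          exact hnm ((hmemA _).mp hmem)
        · -- left
          have hge : δ ≤ (-(2*δ)) * (v i 0) := by nlinarith
          have hnm := key 0 (-(2*δ)) hge
          refine Set.mem_union_right _ ⟨hxA, fun hmem => ?_⟩
          have he : F x + ((-(2*δ) : ℝ), (0:ℝ)) = F (x + (-(2*δ)) • EuclideanSpace.single 0 1) := by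
            rw [hFadd]
            norm_num
          rw [he] at hmem
          exact hnm ((hmemA _).mp hmem)
      · rcases le_or_gt 0 (v i 1) with hsg | hsg
        · -- up
          have hge : δ ≤ (2*δ) * (v i 1) := by nlinarith
          have hnm := key 1 (2*δ) hge
          refine Set.mem_union_left _ (Set.mem_union_left _ (Set.mem_union_left _ ⟨hxA, fun hmem => ?_⟩))
          have he : F x + ((0:ℝ), (2*δ : ℝ)) = F (x + (2*δ) • EuclideanSpace.single 1 1) := by
            rw [hFadd]
            norm_num
          rw [he] at hmem
          exact hnm ((hmemA _).mp hmem)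
        · -- down
          have hge : δ ≤ (-(2*δ)) * (v i 1) := by nlinarith
          have hnm := key 1 (-(2*δ)) hge
          refine Set.mem_union_left _ (Set.mem_union_left _ (Set.mem_union_right _ ⟨hxA, fun hmem => ?_⟩))
          have he : F x + ((0:ℝ), (-(2*δ) : ℝ)) = F (x + (-(2*δ)) • EuclideanSpace.single 1 1) := by
            rw [hFadd]
            norm_num
          rw [he] at hmem
          exact hnm ((hmemA _).mp hmem)
    exact hmain
  -- measure bounds
  have hSmeas : ∀ w : ℝ × ℝ, MeasurableSet {p : ℝ × ℝ | p ∈ A ∧ p + w ∉ A} := by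
    intro w
    have he : {p : ℝ × ℝ | p ∈ A ∧ p + w ∉ A} = A ∩ (fun p => p + w) ⁻¹' Aᶜ := rfl
    rw [he]
    exact hAmeas.inter (hAmeas.compl.preimage (measurable_add_const _))
  have hUmeas : MeasurableSet (S1 ∪ S2 ∪ S3 ∪ S4) :=
    (((hSmeas _).union (hSmeas _)).union (hSmeas _)).union (hSmeas _)
  have hb1 : volume S1 ≤ ENNReal.ofReal (2*δ) := by
    have := plane_vert A hAmeas hAconv hAsub (2*δ)
    rwa [abs_of_nonneg (by linarith : (0:ℝ) ≤ 2*δ)] at this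
  have hb2 : volume S2 ≤ ENNReal.ofReal (2*δ) := by
    have := plane_vert A hAmeas hAconv hAsub (-(2*δ))
    rwa [abs_neg, abs_of_nonneg (by linarith : (0:ℝ) ≤ 2*δ)] at this
  have hb3 : volume S3 ≤ ENNReal.ofReal (2*δ) := by
    have := plane_hor A hAmeas hAconv hAsub (2*δ)
    rwa [abs_of_nonneg (by linarith : (0:ℝ) ≤ 2*δ)] at this
  have hb4 : volume S4 ≤ ENNReal.ofReal (2*δ) := by
    have := plane_hor A hAmeas hAconv hAsub (-(2*δ))
    rwa [abs_neg, abs_of_nonneg (by linarith : (0:ℝ) ≤ 2*δ)] at this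
  calc volume ((C' ∩ Q) \ C) ≤ volume (⇑F ⁻¹' (S1 ∪ S2 ∪ S3 ∪ S4)) := measure_mono hDsub
    _ = volume (S1 ∪ S2 ∪ S3 ∪ S4) := hF.measure_preimage hUmeas.nullMeasurableSet
    _ ≤ volume (S1 ∪ S2 ∪ S3) + volume S4 := measure_union_le _ _
    _ ≤ (volume (S1 ∪ S2) + volume S3) + volume S4 :=
        add_le_add_left (measure_union_le _ _) _
    _ ≤ ((volume S1 + volume S2) + volume S3) + volume S4 :=
        add_le_add_left (add_le_add_left (measure_union_le _ _) _) _
    _ ≤ ((ENNReal.ofReal (2*δ) + ENNReal.ofReal (2*δ)) + ENNReal.ofReal (2*δ))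
          + ENNReal.ofReal (2*δ) :=
        add_le_add (add_le_add (add_le_add hb1 hb2) hb3) hb4
    _ = ENNReal.ofReal (8 * δ) := by
        rw [← ENNReal.ofReal_add (by linarith) (by linarith),
          ← ENNReal.ofReal_add (by linarith) (by linarith),
          ← ENNReal.ofReal_add (by linarith) (by linarith)]
        ring_nf
end

section
/- Let P' = {p₀, p₁, …, p_{q−1}} be points in [0,1]², and for each i let Lᵢ be a halfplane containing P' with pᵢ ∈ ∂Lᵢ, where the unit normal vectors of L₀,…,L_{q−1} are v_i = (sin(2πi/q), cos(2πi/q)). Let C = ∩ᵢ Lᵢ. Then the area of C \ conv(P') is at most K/q · perimeter(conv(P')) ≤ K'/q for absolute constants K, K', using that consecutive normal directions differ by angle 2π/q and that each triangle cut between an edge of conv(P') and the corresponding corner of C has area at most O(|edge| · 2π/q). -/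
open MeasureTheory Set
open Real Pointwise

lemma exists_dir (q : ℕ) (hq : 1 ≤ q) (A B : ℝ) (hAB : A^2 + B^2 = 1) :
    ∃ (i : Fin q) (θ : ℝ), |θ| ≤ π / q ∧
      A = Real.sin (2 * π * (i:ℝ) / q + θ) ∧ B = Real.cos (2 * π * (i:ℝ) / q + θ) := by
  have hq0 : (0:ℝ) < q := by exact_mod_cast hq
  have hqne : (q:ℝ) ≠ 0 := ne_of_gt hq0
  have hB1 : -1 ≤ B := by nlinarith [sq_nonneg A]
  have hB2 : B ≤ 1 := by nlinarith [sq_nonneg A]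
  have hsin : Real.sin (Real.arccos B) = |A| := by
    rw [Real.sin_arccos, show (1 - B^2) = A^2 by linarith, Real.sqrt_sq_eq_abs]
  set φ : ℝ := if 0 ≤ A then Real.arccos B else -Real.arccos B with hφ
  have hsφ : Real.sin φ = A := by
    rw [hφ]; split_ifs with h
    · rw [hsin, abs_of_nonneg h]
    · rw [Real.sin_neg, hsin, abs_of_neg (not_le.1 h)]; ring
  have hcφ : Real.cos φ = B := by
    rw [hφ]; split_ifs <;> simp [Real.cos_arccos hB1 hB2]
  set m : ℤ := round (φ * q / (2*π)) with hm
  set θ : ℝ := φ - 2*π*m/q with hθdef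
  have hround : |φ * q / (2*π) - m| ≤ 1/2 := abs_sub_round _
  have hθ : |θ| ≤ π / q := by
    have e1 : (2*π/q) * (φ * q / (2*π)) = φ := by field_simp
    have hrepr : θ = (2*π/q) * (φ * q / (2*π) - m) := by
      rw [mul_sub, e1, hθdef]; ring
    rw [hrepr, abs_mul, abs_of_pos (by positivity : (0:ℝ) < 2*π/q)]
    calc 2*π/q * |φ * q / (2*π) - m| ≤ 2*π/q * (1/2) :=
          mul_le_mul_of_nonneg_left hround (by positivity)
      _ = π / q := by ring
  have h1 : (0:ℤ) ≤ m % q := Int.emod_nonneg m (by exact_mod_cast (by omega : q ≠ 0))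
  have h2 : m % q < q := Int.emod_lt_of_pos m (by exact_mod_cast (by omega : 0 < q))
  have hi : ((((m % q).toNat : ℕ) : ℝ)) = ((m % (q:ℤ) : ℤ) : ℝ) := by
    exact_mod_cast Int.toNat_of_nonneg h1
  have hk : 2 * π * (((m % q).toNat : ℕ) : ℝ) / q + θ = φ + (-(m / q) : ℤ) * (2*π) := by
    rw [hi, hθdef]
    have h0 := Int.mul_ediv_add_emod m (q:ℤ)
    have h0' : (q:ℝ) * ((m / (q:ℤ) : ℤ):ℝ) + ((m % (q:ℤ) : ℤ):ℝ) = (m:ℝ) := by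
      exact_mod_cast h0
    have hqm : ((m % (q:ℤ) : ℤ) : ℝ) = (m:ℝ) - (q:ℝ) * ((m / (q:ℤ) : ℤ) : ℝ) := by
      linarith
    rw [hqm]
    push_cast
    field_simp
    ring
  refine ⟨⟨(m % q).toNat, by omega⟩, θ, hθ, ?_, ?_⟩
  · simp only [hk]; rw [Real.sin_add_int_mul_two_pi φ (-(m / (q:ℤ))), hsφ]
  · simp only [hk]; rw [Real.cos_add_int_mul_two_pi φ (-(m / (q:ℤ))), hcφ]

lemma norm_bound (q : ℕ) (hq : 3 ≤ q) (p : Fin q → ℝ × ℝ)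
    (hp : ∀ i, (p i).1 ∈ Icc (0:ℝ) 1 ∧ (p i).2 ∈ Icc (0:ℝ) 1)
    (x : ℝ × ℝ)
    (hx : ∀ i : Fin q, Real.sin (2*π*(i:ℝ)/q) * x.1 + Real.cos (2*π*(i:ℝ)/q) * x.2 ≤
      Real.sin (2*π*(i:ℝ)/q) * (p i).1 + Real.cos (2*π*(i:ℝ)/q) * (p i).2) :
    |x.1| ≤ 4 ∧ |x.2| ≤ 4 := by
  have hq0 : (0:ℝ) < q := by positivity
  set r : ℝ := Real.sqrt (x.1^2 + x.2^2) with hr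
  have hrnn : 0 ≤ r := Real.sqrt_nonneg _
  have hr2 : r^2 = x.1^2 + x.2^2 := Real.sq_sqrt (by positivity)
  suffices hr4 : r ≤ 4 by
    constructor
    · calc |x.1| = Real.sqrt (x.1^2) := (Real.sqrt_sq_eq_abs _).symm
        _ ≤ r := Real.sqrt_le_sqrt (by nlinarith [sq_nonneg x.2])
        _ ≤ 4 := hr4
    · calc |x.2| = Real.sqrt (x.2^2) := (Real.sqrt_sq_eq_abs _).symm
        _ ≤ r := Real.sqrt_le_sqrt (by nlinarith [sq_nonneg x.1])
        _ ≤ 4 := hr4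
  rcases eq_or_lt_of_le hrnn with h0 | hrpos
  · linarith
  have hAB : (x.1/r)^2 + (x.2/r)^2 = 1 := by
    field_simp
    linarith [hr2]
  obtain ⟨i, θ, hθ, hA, hB⟩ := exists_dir q (by omega) (x.1/r) (x.2/r) hAB
  have hxi := hx i
  set α : ℝ := 2*π*(i:ℝ)/q with hα
  have hx1 : x.1 = r * Real.sin (α + θ) := by
    rw [← hA]; field_simp
  have hx2 : x.2 = r * Real.cos (α + θ) := by
    rw [← hB]; field_simp
  have hsum : Real.sin α * x.1 + Real.cos α * x.2 = r * Real.cos θ := by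
    rw [hx1, hx2, Real.sin_add, Real.cos_add]
    linear_combination (r * Real.cos θ) * Real.sin_sq_add_cos_sq α
  have h2 : Real.sin α * (p i).1 + Real.cos α * (p i).2 ≤ 2 := by
    have h1 := (hp i).1
    have h2 := (hp i).2
    simp only [Set.mem_Icc] at h1 h2
    nlinarith [Real.neg_one_le_sin α, Real.sin_le_one α, Real.neg_one_le_cos α,
      Real.cos_le_one α, h1.1, h1.2, h2.1, h2.2]
  have hθ3 : |θ| ≤ π/3 := by
    refine hθ.trans ?_
    have h3 : (3:ℝ) ≤ q := by exact_mod_cast hq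
    exact div_le_div_of_nonneg_left Real.pi_pos.le (by norm_num) h3
  have hcos : (1:ℝ)/2 ≤ Real.cos θ := by
    calc (1:ℝ)/2 = Real.cos (π/3) := Real.cos_pi_div_three.symm
      _ ≤ Real.cos |θ| := Real.cos_le_cos_of_nonneg_of_le_pi (abs_nonneg θ)
          (by linarith [Real.pi_pos]) hθ3
      _ = Real.cos θ := Real.cos_abs θ
  nlinarith [hsum, h2, hxi, hcos, hrnn, mul_nonneg hrnn (by linarith : (0:ℝ) ≤ Real.cos θ - 1/2)]

lemma support_est (q : ℕ) (hq : 3 ≤ q) (p : Fin q → ℝ × ℝ)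
    (hp : ∀ i, (p i).1 ∈ Icc (0:ℝ) 1 ∧ (p i).2 ∈ Icc (0:ℝ) 1)
    (x : ℝ × ℝ)
    (hx : ∀ i : Fin q, Real.sin (2*π*(i:ℝ)/q) * x.1 + Real.cos (2*π*(i:ℝ)/q) * x.2 ≤
      Real.sin (2*π*(i:ℝ)/q) * (p i).1 + Real.cos (2*π*(i:ℝ)/q) * (p i).2)
    (A B : ℝ) (hAB : A^2 + B^2 = 1) :
    ∃ i : Fin q, A * x.1 + B * x.2 ≤ A * (p i).1 + B * (p i).2 + 10 * π / q := by
  have hq0 : (0:ℝ) < q := by positivity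
  obtain ⟨hx1, hx2⟩ := norm_bound q hq p hp x hx
  obtain ⟨i, θ, hθ, hA, hB⟩ := exists_dir q (by omega) A B hAB
  refine ⟨i, ?_⟩
  set α : ℝ := 2*π*(i:ℝ)/q with hα
  have h1 : Real.sin α * (x.1 - (p i).1) + Real.cos α * (x.2 - (p i).2) ≤ 0 := by
    have := hx i
    rw [← hα] at this
    ring_nf at this ⊢
    linarith
  have hθ3 : |θ| ≤ π/3 := by
    refine hθ.trans ?_
    have h3 : (3:ℝ) ≤ q := by exact_mod_cast hq
    exact div_le_div_of_nonneg_left Real.pi_pos.le (by norm_num) h3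
  have hcosθ : 0 ≤ Real.cos θ := by
    have : (1:ℝ)/2 ≤ Real.cos θ := by
      calc (1:ℝ)/2 = Real.cos (π/3) := Real.cos_pi_div_three.symm
        _ ≤ Real.cos |θ| := Real.cos_le_cos_of_nonneg_of_le_pi (abs_nonneg θ)
            (by linarith [Real.pi_pos]) hθ3
        _ = Real.cos θ := Real.cos_abs θ
    linarith
  have habs : |θ| ≤ π := by linarith [Real.pi_pos, hθ3]
  have hsθ : |Real.sin θ| ≤ π / q := by
    have h2 : |Real.sin θ| = Real.sin |θ| := by
      rcases le_or_gt 0 θ with h | h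
      · rw [abs_of_nonneg h]
        exact abs_of_nonneg (Real.sin_nonneg_of_nonneg_of_le_pi h
          (le_trans (le_abs_self θ) habs))
      · have habs' : |θ| = -θ := abs_of_neg h
        rw [habs']
        rw [show |Real.sin θ| = |Real.sin (-θ)| by rw [Real.sin_neg, abs_neg]]
        exact abs_of_nonneg (Real.sin_nonneg_of_nonneg_of_le_pi (by linarith)
          (by rw [habs'] at habs; linarith))
    rw [h2]
    exact le_trans (Real.sin_le (abs_nonneg θ)) hθ
  have hd1 : |x.1 - (p i).1| ≤ 5 := by
    have h41 := abs_le.mp hx1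
    have hpi := (hp i).1
    simp only [Set.mem_Icc] at hpi
    rw [abs_le]; constructor <;> [linarith [h41.1, hpi.2]; linarith [h41.2, hpi.1]]
  have hd2 : |x.2 - (p i).2| ≤ 5 := by
    have h41 := abs_le.mp hx2
    have hpi := (hp i).2
    simp only [Set.mem_Icc] at hpi
    rw [abs_le]; constructor <;> [linarith [h41.1, hpi.2]; linarith [h41.2, hpi.1]]
  have hterm2 : Real.sin θ * (Real.cos α * (x.1 - (p i).1) - Real.sin α * (x.2 - (p i).2))
      ≤ (π/q) * 10 := by
    calc Real.sin θ * (Real.cos α * (x.1 - (p i).1) - Real.sin α * (x.2 - (p i).2))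
        ≤ |Real.sin θ * (Real.cos α * (x.1 - (p i).1) - Real.sin α * (x.2 - (p i).2))| :=
          le_abs_self _
      _ = |Real.sin θ| * |Real.cos α * (x.1 - (p i).1) - Real.sin α * (x.2 - (p i).2)| :=
          abs_mul _ _
      _ ≤ (π/q) * 10 := by
          apply mul_le_mul hsθ ?_ (abs_nonneg _) (by positivity)
          calc |Real.cos α * (x.1 - (p i).1) - Real.sin α * (x.2 - (p i).2)|
              ≤ |Real.cos α * (x.1 - (p i).1)| + |Real.sin α * (x.2 - (p i).2)| :=
                abs_sub _ _
            _ = |Real.cos α| * |x.1 - (p i).1| + |Real.sin α| * |x.2 - (p i).2| := by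
                rw [abs_mul, abs_mul]
            _ ≤ 1 * 5 + 1 * 5 := by
                gcongr
                · exact Real.abs_cos_le_one α
                · exact Real.abs_sin_le_one α
            _ = 10 := by norm_num
  have expand : A * x.1 + B * x.2 - (A * (p i).1 + B * (p i).2)
      = Real.cos θ * (Real.sin α * (x.1 - (p i).1) + Real.cos α * (x.2 - (p i).2))
        + Real.sin θ * (Real.cos α * (x.1 - (p i).1) - Real.sin α * (x.2 - (p i).2)) := by
    rw [hA, hB, Real.sin_add, Real.cos_add]
    ring
  have ht1 : Real.cos θ * (Real.sin α * (x.1 - (p i).1) + Real.cos α * (x.2 - (p i).2)) ≤ 0 :=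
    mul_nonpos_of_nonneg_of_nonpos hcosθ h1
  have hrw : 10 * π / q = (π/q) * 10 := by ring
  linarith [expand, ht1, hterm2, hrw]

lemma slice_add_vert (W : Set (ℝ × ℝ)) (e : ℝ) (x : ℝ) :
    Prod.mk x ⁻¹' (W + (({0} : Set ℝ) ×ˢ Icc (-e) e)) = (Prod.mk x ⁻¹' W) + Icc (-e) e := by
  ext y
  simp only [mem_preimage, Set.mem_add, Set.mem_prod, Set.mem_singleton_iff, Set.mem_Icc]
  constructor
  · rintro ⟨w, hw, s, ⟨hs0, hs⟩, heq⟩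
    refine ⟨w.2, ?_, s.2, hs, ?_⟩
    · have h1 : w.1 = x := by
        have := congrArg Prod.fst heq
        simp [hs0] at this
        linarith [this]
      rwa [show (x, w.2) = w by rw [← h1]]
    · have := congrArg Prod.snd heq
      simpa using this
  · rintro ⟨w2, hw2, s2, hs2, heq⟩
    exact ⟨(x, w2), hw2, (0, s2), ⟨rfl, hs2⟩, by simp [heq]⟩

lemma vol_add_vseg (W : Set (ℝ × ℝ)) (hWc : IsCompact W) (hWv : Convex ℝ W)
    (c₁ c₂ d₁ d₂ e : ℝ) (he : 0 ≤ e) (hsub : W ⊆ Icc c₁ c₂ ×ˢ Icc d₁ d₂) :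
    volume (W + ({0} ×ˢ Icc (-e) e)) ≤
      volume W + ENNReal.ofReal (2*e) * ENNReal.ofReal (c₂ - c₁) := by
  have hV : IsCompact ((({0} : Set ℝ)) ×ˢ Icc (-e) e) := isCompact_singleton.prod isCompact_Icc
  have hA : IsCompact (W + ({0} : Set ℝ) ×ˢ Icc (-e) e) := hWc.add hV
  have hWm : MeasurableSet W := hWc.measurableSet
  have key : ∀ x : ℝ, volume (Prod.mk x ⁻¹' (W + ({0} : Set ℝ) ×ˢ Icc (-e) e)) ≤
      volume (Prod.mk x ⁻¹' W) + (Icc c₁ c₂).indicator (fun _ => ENNReal.ofReal (2*e)) x := by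
    intro x
    rw [slice_add_vert]
    rcases (Prod.mk x ⁻¹' W).eq_empty_or_nonempty with hS | hS
    · rw [hS, Set.empty_add]
      simp
    · set S := Prod.mk x ⁻¹' W with hSdef
      have hScl : IsClosed S := hWc.isClosed.preimage (Continuous.prodMk_right x)
      have hSsub : S ⊆ Icc d₁ d₂ := fun y hy => (hsub hy).2
      have hbb : BddBelow S := ⟨d₁, fun y hy => (hSsub hy).1⟩
      have hba : BddAbove S := ⟨d₂, fun y hy => (hSsub hy).2⟩
      have hconv : Convex ℝ S := by
        intro y hy z hz a b ha hb hab
        have h := hWv hy hz ha hb hab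
        have heq : a • (x, y) + b • (x, z) = (x, a * y + b * z) := by
          refine Prod.ext ?_ ?_
          · show a * x + b * x = x
            linear_combination x * hab
          · rfl
        rwa [heq] at h
      have hiS : sInf S ∈ S := hScl.csInf_mem hS hbb
      have hsS : sSup S ∈ S := hScl.csSup_mem hS hba
      have hSIcc : S = Icc (sInf S) (sSup S) := by
        apply Subset.antisymm
        · exact fun y hy => ⟨csInf_le hbb hy, le_csSup hba hy⟩
        · exact hconv.ordConnected.out hiS hsS
      have hle : sInf S ≤ sSup S := csInf_le_csSup hS hbb hba
      have hxIcc : x ∈ Icc c₁ c₂ := by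
        obtain ⟨y, hy⟩ := hS
        exact (hsub hy).1
      rw [hSIcc, Set.Icc_add_Icc hle (by linarith), Set.indicator_of_mem hxIcc]
      rw [Real.volume_Icc, Real.volume_Icc]
      rw [show sSup S + e - (sInf S + -e) = (sSup S - sInf S) + 2*e by ring]
      rw [ENNReal.ofReal_add (by linarith) (by linarith)]
  calc volume (W + ({0} : Set ℝ) ×ˢ Icc (-e) e)
      = ∫⁻ x, volume (Prod.mk x ⁻¹' (W + ({0} : Set ℝ) ×ˢ Icc (-e) e)) := by
        rw [Measure.volume_eq_prod, Measure.prod_apply hA.measurableSet]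
    _ ≤ ∫⁻ x, (volume (Prod.mk x ⁻¹' W)
          + (Icc c₁ c₂).indicator (fun _ => ENNReal.ofReal (2*e)) x) := lintegral_mono key
    _ = (∫⁻ x, volume (Prod.mk x ⁻¹' W))
          + ∫⁻ x, (Icc c₁ c₂).indicator (fun _ => ENNReal.ofReal (2*e)) x :=
        lintegral_add_left (measurable_measure_prodMk_left hWm) _
    _ = volume W + ENNReal.ofReal (2*e) * ENNReal.ofReal (c₂ - c₁) := by
        congr 1
        · rw [Measure.volume_eq_prod, Measure.prod_apply hWm]
        · rw [lintegral_indicator measurableSet_Icc _, setLIntegral_const, Real.volume_Icc]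

lemma vol_add_hseg (W : Set (ℝ × ℝ)) (hWc : IsCompact W) (hWv : Convex ℝ W)
    (c₁ c₂ d₁ d₂ e : ℝ) (he : 0 ≤ e) (hsub : W ⊆ Icc c₁ c₂ ×ˢ Icc d₁ d₂) :
    volume (W + (Icc (-e) e ×ˢ ({0} : Set ℝ))) ≤
      volume W + ENNReal.ofReal (2*e) * ENNReal.ofReal (d₂ - d₁) := by
  have hH : IsCompact (Icc (-e) e ×ˢ ({0} : Set ℝ)) := isCompact_Icc.prod isCompact_singleton
  have hA : IsCompact (W + Icc (-e) e ×ˢ ({0} : Set ℝ)) := hWc.add hH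
  have mp : MeasurePreserving (Prod.swap : ℝ × ℝ → ℝ × ℝ) volume volume := by
    rw [show (volume : Measure (ℝ × ℝ)) = volume.prod volume from Measure.volume_eq_prod ℝ ℝ]
    exact Measure.measurePreserving_swap
  have hpre : Prod.swap ⁻¹' (W + Icc (-e) e ×ˢ ({0} : Set ℝ))
      = (Prod.swap ⁻¹' W) + (({0} : Set ℝ) ×ˢ Icc (-e) e) := by
    ext z
    simp only [mem_preimage, Set.mem_add, Set.mem_prod, Set.mem_singleton_iff, Set.mem_Icc]
    constructor
    · rintro ⟨w, hw, s, hs, heq⟩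
      refine ⟨w.swap, by simpa using hw, s.swap, ⟨hs.2, hs.1⟩, ?_⟩
      have := congrArg Prod.swap heq
      simpa using this
    · rintro ⟨w, hw, s, hs, heq⟩
      refine ⟨w.swap, hw, s.swap, ⟨hs.2, hs.1⟩, ?_⟩
      have := congrArg Prod.swap heq
      simpa using this
  have hW' : IsCompact (Prod.swap ⁻¹' W : Set (ℝ × ℝ)) := by
    rw [← Set.image_swap_eq_preimage_swap]
    exact hWc.image continuous_swap
  have hW'v : Convex ℝ (Prod.swap ⁻¹' W : Set (ℝ × ℝ)) := by
    intro z hz w hw a b ha hb hab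
    have h := hWv hz hw ha hb hab
    have heq : Prod.swap (a • z + b • w) = a • Prod.swap z + b • Prod.swap w := rfl
    simpa [mem_preimage, heq] using h
  have hW'sub : (Prod.swap ⁻¹' W : Set (ℝ × ℝ)) ⊆ Icc d₁ d₂ ×ˢ Icc c₁ c₂ := by
    intro z hz
    exact ⟨(hsub hz).2, (hsub hz).1⟩
  calc volume (W + Icc (-e) e ×ˢ ({0} : Set ℝ))
      = volume (Prod.swap ⁻¹' (W + Icc (-e) e ×ˢ ({0} : Set ℝ))) :=
        (mp.measure_preimage hA.measurableSet.nullMeasurableSet).symm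
    _ = volume ((Prod.swap ⁻¹' W) + (({0} : Set ℝ) ×ˢ Icc (-e) e)) := by rw [hpre]
    _ ≤ volume (Prod.swap ⁻¹' W) + ENNReal.ofReal (2*e) * ENNReal.ofReal (d₂ - d₁) :=
        vol_add_vseg _ hW' hW'v d₁ d₂ c₁ c₂ e he hW'sub
    _ = volume W + ENNReal.ofReal (2*e) * ENNReal.ofReal (d₂ - d₁) := by
        rw [mp.measure_preimage hWc.measurableSet.nullMeasurableSet]


set_option maxHeartbeats 2000000 in
/-- If `p₀,…,p_{q−1} ∈ [0,1]²` and `Lᵢ` is the halfplane with unit normal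
`vᵢ = (sin(2πi/q), cos(2πi/q))` whose boundary passes through `pᵢ` and which contains all the
points, then the area of `(⋂ᵢ Lᵢ) \ conv{p₀,…,p_{q−1}}` is at most `K/q` for an absolute
constant `K`. -/
theorem stmt14 :
    ∃ K : ℝ, 0 < K ∧
      ∀ (q : ℕ), 3 ≤ q → ∀ (p : Fin q → ℝ × ℝ),
        (∀ i, (p i).1 ∈ Set.Icc (0:ℝ) 1 ∧ (p i).2 ∈ Set.Icc (0:ℝ) 1) →
        (∀ i j : Fin q,
          Real.sin (2 * Real.pi * (i : ℝ) / q) * (p j).1 +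
              Real.cos (2 * Real.pi * (i : ℝ) / q) * (p j).2 ≤
            Real.sin (2 * Real.pi * (i : ℝ) / q) * (p i).1 +
              Real.cos (2 * Real.pi * (i : ℝ) / q) * (p i).2) →
        volume ((⋂ i : Fin q, {x : ℝ × ℝ |
            Real.sin (2 * Real.pi * (i : ℝ) / q) * x.1 +
                Real.cos (2 * Real.pi * (i : ℝ) / q) * x.2 ≤
              Real.sin (2 * Real.pi * (i : ℝ) / q) * (p i).1 +
                Real.cos (2 * Real.pi * (i : ℝ) / q) * (p i).2}) \
          convexHull ℝ (Set.range p)) ≤ ENNReal.ofReal (K / q) := by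
  refine ⟨2400, by norm_num, ?_⟩
  intro q hq p hp _hsep
  have hq0 : (0:ℝ) < q := by positivity
  set e : ℝ := 10 * π / q with he_def
  have he0 : 0 < e := by positivity
  set Q : Set (ℝ × ℝ) := convexHull ℝ (Set.range p) with hQdef
  set S : Set (ℝ × ℝ) := Icc (-e) e ×ˢ Icc (-e) e with hSdef
  set H : Set (ℝ × ℝ) := Icc (-e) e ×ˢ ({0} : Set ℝ) with hHdef
  set V : Set (ℝ × ℝ) := ({0} : Set ℝ) ×ˢ Icc (-e) e with hVdef
  have hrange : Set.range p ⊆ Icc (0:ℝ) 1 ×ˢ Icc (0:ℝ) 1 := by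
    rintro z ⟨i, rfl⟩; exact ⟨(hp i).1, (hp i).2⟩
  have hQc : IsCompact Q := (Set.finite_range p).isCompact_convexHull ℝ
  have hQconv : Convex ℝ Q := convex_convexHull ℝ _
  have hQsub : Q ⊆ Icc (0:ℝ) 1 ×ˢ Icc (0:ℝ) 1 :=
    convexHull_min hrange ((convex_Icc 0 1).prod (convex_Icc 0 1))
  have hSconv : Convex ℝ S := (convex_Icc _ _).prod (convex_Icc _ _)
  have hScomp : IsCompact S := isCompact_Icc.prod isCompact_Icc
  have hQS_closed : IsClosed (Q + S) := (hQc.add hScomp).isClosed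
  have hQS_conv : Convex ℝ (Q + S) := hQconv.add hSconv
  have h0S : ((0,0) : ℝ × ℝ) ∈ S := by
    refine ⟨⟨?_, ?_⟩, ⟨?_, ?_⟩⟩ <;> norm_num <;> linarith
  have hQsubQS : Q ⊆ Q + S := fun z hz => Set.mem_add.mpr ⟨z, hz, (0,0), h0S, by simp⟩
  have hCQS : (⋂ i : Fin q, {x : ℝ × ℝ |
      Real.sin (2 * Real.pi * (i : ℝ) / q) * x.1 +
          Real.cos (2 * Real.pi * (i : ℝ) / q) * x.2 ≤
        Real.sin (2 * Real.pi * (i : ℝ) / q) * (p i).1 +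
          Real.cos (2 * Real.pi * (i : ℝ) / q) * (p i).2}) ⊆ Q + S := by
    intro x hxC
    have hx : ∀ i : Fin q, Real.sin (2*π*(i:ℝ)/q) * x.1 + Real.cos (2*π*(i:ℝ)/q) * x.2 ≤
        Real.sin (2*π*(i:ℝ)/q) * (p i).1 + Real.cos (2*π*(i:ℝ)/q) * (p i).2 :=
      fun i => mem_iInter.1 hxC i
    by_contra hxn
    obtain ⟨f, u, hfu, hux⟩ := geometric_hahn_banach_closed_point hQS_conv hQS_closed hxn
    set a : ℝ := f (1,0) with ha
    set b : ℝ := f (0,1) with hb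
    have hf : ∀ z : ℝ × ℝ, f z = a * z.1 + b * z.2 := by
      intro z
      have hz : f z = f (z.1 • ((1:ℝ),(0:ℝ)) + z.2 • ((0:ℝ),(1:ℝ))) := by
        congr 1
        refine Prod.ext ?_ ?_ <;> simp
      rw [hz, map_add, f.map_smul, f.map_smul, smul_eq_mul, smul_eq_mul, ← ha, ← hb]
      ring
    by_cases hab0 : a = 0 ∧ b = 0
    · have hw : p ⟨0, by omega⟩ + (0,0) ∈ Q + S :=
        Set.add_mem_add (subset_convexHull ℝ _ ⟨⟨0, by omega⟩, rfl⟩) h0S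
      have h1 := hfu _ hw
      have h2 : f (p ⟨0, by omega⟩ + (0,0)) = 0 := by
        rw [hf]; rw [hab0.1, hab0.2]; ring
      have h3 : f x = 0 := by rw [hf]; rw [hab0.1, hab0.2]; ring
      rw [h2] at h1; rw [h3] at hux; linarith
    · have habs : 0 < a^2 + b^2 := by
        rcases not_and_or.mp hab0 with h | h <;> positivity
      set r : ℝ := Real.sqrt (a^2 + b^2) with hrdef
      have hr : 0 < r := Real.sqrt_pos.mpr habs
      have hr2 : r^2 = a^2 + b^2 := Real.sq_sqrt habs.le
      have hAB : (a/r)^2 + (b/r)^2 = 1 := by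
        field_simp
        linarith [hr2]
      obtain ⟨i, hi⟩ := support_est q hq p hp x hx (a/r) (b/r) hAB
      have hi' : a * x.1 + b * x.2 ≤ a * (p i).1 + b * (p i).2 + r * e := by
        have hmul := mul_le_mul_of_nonneg_left hi hr.le
        calc a * x.1 + b * x.2 = r * (a/r * x.1 + b/r * x.2) := by
              field_simp
          _ ≤ r * (a/r * (p i).1 + b/r * (p i).2 + 10 * π / q) := hmul
          _ = a * (p i).1 + b * (p i).2 + r * e := by
              rw [he_def]; field_simp; try ring
      set s0 : ℝ × ℝ := (if 0 ≤ a then e else -e, if 0 ≤ b then e else -e) with hs0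
      have hs0S : s0 ∈ S := by
        refine ⟨?_, ?_⟩
        · show (if 0 ≤ a then e else -e) ∈ Icc (-e) e
          split_ifs <;> exact ⟨by linarith, by linarith⟩
        · show (if 0 ≤ b then e else -e) ∈ Icc (-e) e
          split_ifs <;> exact ⟨by linarith, by linarith⟩
      have hfs0 : a * s0.1 + b * s0.2 = (|a| + |b|) * e := by
        show a * (if 0 ≤ a then e else -e) + b * (if 0 ≤ b then e else -e) = (|a| + |b|) * e
        split_ifs with h1 h2 h2
        · rw [abs_of_nonneg h1, abs_of_nonneg h2]; ring
        · rw [abs_of_nonneg h1, abs_of_neg (not_le.1 h2)]; ring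
        · rw [abs_of_neg (not_le.1 h1), abs_of_nonneg h2]; ring
        · rw [abs_of_neg (not_le.1 h1), abs_of_neg (not_le.1 h2)]; ring
      have hmem : p i + s0 ∈ Q + S :=
        Set.add_mem_add (subset_convexHull ℝ _ ⟨i, rfl⟩) hs0S
      have h2 := hfu _ hmem
      have h3 : r ≤ |a| + |b| := by
        rw [hrdef]
        have hsq : a^2 + b^2 ≤ (|a| + |b|)^2 := by
          nlinarith [sq_abs a, sq_abs b, mul_nonneg (abs_nonneg a) (abs_nonneg b)]
        calc Real.sqrt (a^2 + b^2) ≤ Real.sqrt ((|a| + |b|)^2) := Real.sqrt_le_sqrt hsq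
          _ = |a| + |b| := Real.sqrt_sq (by positivity)
      have hfps : f (p i + s0) = a * (p i).1 + b * (p i).2 + (|a| + |b|) * e := by
        rw [hf, Prod.fst_add, Prod.snd_add]
        rw [show a * ((p i).1 + s0.1) + b * ((p i).2 + s0.2)
          = a * (p i).1 + b * (p i).2 + (a * s0.1 + b * s0.2) by ring, hfs0]
      have hxf : f x = a * x.1 + b * x.2 := hf x
      have h4 : r * e ≤ (|a| + |b|) * e := mul_le_mul_of_nonneg_right h3 he0.le
      linarith [h2, hux, hfps, hxf, hi', h4]
  -- measure computation
  have hHcomp : IsCompact H := isCompact_Icc.prod isCompact_singleton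
  have hHconv : Convex ℝ H := (convex_Icc _ _).prod (convex_singleton _)
  have hdecomp : S = H + V := by
    ext z
    constructor
    · intro hz
      exact Set.mem_add.mpr ⟨(z.1, 0), ⟨hz.1, rfl⟩, (0, z.2), ⟨rfl, hz.2⟩,
        by refine Prod.ext ?_ ?_ <;> simp⟩
    · intro hz
      obtain ⟨w, hw, v, hv, hzeq⟩ := Set.mem_add.mp hz
      have hv1 : v.1 = 0 := hv.1
      have hw2 : w.2 = 0 := hw.2
      rw [← hzeq]
      exact ⟨by rw [Prod.fst_add, hv1, add_zero]; exact hw.1,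
        by rw [Prod.snd_add, hw2, zero_add]; exact hv.2⟩
  have hQHsub : Q + H ⊆ Icc (-e) (1+e) ×ˢ Icc (0:ℝ) 1 := by
    intro z hz
    obtain ⟨w, hw, v, hv, hzeq⟩ := Set.mem_add.mp hz
    have hwQ := hQsub hw
    have hv2 : v.2 = 0 := hv.2
    rw [← hzeq]
    constructor
    · rw [Prod.fst_add]
      exact ⟨by linarith [hwQ.1.1, hv.1.1], by linarith [hwQ.1.2, hv.1.2]⟩
    · rw [Prod.snd_add, hv2, add_zero]
      exact hwQ.2
  have step1 : volume (Q + H) ≤ volume Q + ENNReal.ofReal (2*e) * ENNReal.ofReal (1 - 0) :=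
    vol_add_hseg Q hQc hQconv 0 1 0 1 e he0.le hQsub
  have step2 : volume ((Q + H) + V) ≤ volume (Q + H)
      + ENNReal.ofReal (2*e) * ENNReal.ofReal ((1+e) - (-e)) :=
    vol_add_vseg (Q + H) (hQc.add hHcomp) (hQconv.add hHconv) (-e) (1+e) 0 1 e he0.le hQHsub
  have hQSeq : Q + S = (Q + H) + V := by rw [hdecomp, add_assoc]
  have hnum : (2*e) * 1 + (2*e) * (1 + 2*e) ≤ 2400 / (q:ℝ) := by
    have hπ4 : π ≤ 4 := Real.pi_le_four
    have he1 : e * q = 10 * π := by rw [he_def]; field_simp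
    have h40 : e * q ≤ 40 := by rw [he1]; linarith
    have h3q : (3:ℝ) ≤ q := by exact_mod_cast hq
    have he2 : e ≤ 40/3 := by
      rw [he_def]
      calc 10 * π / q ≤ 10 * 4 / q := by gcongr
        _ ≤ 10 * 4 / 3 := by
          apply div_le_div_of_nonneg_left (by norm_num) (by norm_num) h3q
        _ = 40/3 := by norm_num
    rw [le_div_iff₀ hq0]
    nlinarith [h40, he2, he0.le, hq0.le, mul_nonneg he0.le hq0.le]
  have hbound : ENNReal.ofReal (2*e) * ENNReal.ofReal (1 - 0)
      + ENNReal.ofReal (2*e) * ENNReal.ofReal ((1+e) - (-e)) ≤ ENNReal.ofReal (2400 / q) := by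
    rw [← ENNReal.ofReal_mul (by linarith), ← ENNReal.ofReal_mul (by linarith),
      ← ENNReal.ofReal_add (by nlinarith) (by nlinarith)]
    apply ENNReal.ofReal_le_ofReal
    calc 2*e*(1-0) + 2*e*((1+e) - (-e)) = (2*e)*1 + (2*e)*(1+2*e) := by ring
      _ ≤ 2400 / q := hnum
  calc volume ((⋂ i : Fin q, {x : ℝ × ℝ |
        Real.sin (2 * Real.pi * (i : ℝ) / q) * x.1 +
            Real.cos (2 * Real.pi * (i : ℝ) / q) * x.2 ≤
          Real.sin (2 * Real.pi * (i : ℝ) / q) * (p i).1 +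
            Real.cos (2 * Real.pi * (i : ℝ) / q) * (p i).2}) \ Q)
      ≤ volume ((Q + S) \ Q) := measure_mono (diff_subset_diff_left hCQS)
    _ = volume (Q + S) - volume Q :=
        measure_diff hQsubQS hQc.measurableSet.nullMeasurableSet hQc.measure_lt_top.ne
    _ ≤ ENNReal.ofReal (2400 / q) := by
        rw [tsub_le_iff_right]
        calc volume (Q + S) = volume ((Q + H) + V) := by rw [hQSeq]
          _ ≤ volume (Q + H) + ENNReal.ofReal (2*e) * ENNReal.ofReal ((1+e) - (-e)) := step2
          _ ≤ (volume Q + ENNReal.ofReal (2*e) * ENNReal.ofReal (1 - 0))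
              + ENNReal.ofReal (2*e) * ENNReal.ofReal ((1+e) - (-e)) := by
                exact add_le_add_left step1 _
          _ = (ENNReal.ofReal (2*e) * ENNReal.ofReal (1 - 0)
              + ENNReal.ofReal (2*e) * ENNReal.ofReal ((1+e) - (-e))) + volume Q := by
                abel
          _ ≤ ENNReal.ofReal (2400 / q) + volume Q := add_le_add_left hbound _
end

section
/- Let Z be the vertex set of a regular 4q-gon inscribed in a circle, and let B ⊆ Z with |B| ≤ 2q. Then there exists a subset Z' ⊆ Z \ B with |Z'| = q such that no two points of Z' are adjacent vertices of the 4q-gon, and consequently the q 'ear' triangles △a_{i−1}a_i a_{i+1} for a_i ∈ Z' are pairwise interior-disjoint and each is disjoint from the interior of conv(B); hence area(conv(Z) \ conv(B)) ≥ q · η, where η is the common area of the ear triangles. -/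
open MeasureTheory Set
open scoped ENNReal

/-- The `i`-th vertex of the regular `4q`-gon inscribed in the unit circle. -/
noncomputable def gonVertex (q : ℕ) (i : ℤ) : ℝ × ℝ :=
  (Real.cos (2 * Real.pi * (i : ℝ) / (4 * q)), Real.sin (2 * Real.pi * (i : ℝ) / (4 * q)))

/-- The ear triangle at vertex `i` of the regular `4q`-gon. -/
noncomputable def ear (q : ℕ) (i : ℤ) : Set (ℝ × ℝ) :=
  convexHull ℝ {gonVertex q (i - 1), gonVertex q i, gonVertex q (i + 1)}

namespace S18

noncomputable def ang (q : ℕ) (x : ℝ) : ℝ := 2 * Real.pi * x / (4 * q)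

noncomputable def dotp (q : ℕ) (i : ℤ) (x : ℝ × ℝ) : ℝ :=
  x.1 * (gonVertex q i).1 + x.2 * (gonVertex q i).2

noncomputable def cc (q : ℕ) : ℝ := Real.cos (ang q 1)

lemma dotp_gonVertex (q : ℕ) (i j : ℤ) :
    dotp q i (gonVertex q j) = Real.cos (ang q ((j - i : ℤ) : ℝ)) := by
  simp only [dotp, gonVertex, ang, ← Real.cos_sub]
  congr 1
  push_cast
  ring

lemma ang_add_int (q : ℕ) (hq : 1 ≤ q) (x : ℝ) (k : ℤ) :
    ang q (x + 4 * q * k) = ang q x + k * (2 * Real.pi) := by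
  have h4q : (4 * q : ℝ) ≠ 0 := by positivity
  unfold ang
  field_simp

lemma gonVertex_add_period (q : ℕ) (hq : 1 ≤ q) (i k : ℤ) :
    gonVertex q (i + 4 * q * k) = gonVertex q i := by
  have : ((i + 4 * q * k : ℤ) : ℝ) = (i : ℝ) + 4 * q * k := by push_cast; ring
  simp only [gonVertex]
  rw [show 2 * Real.pi * ((i + 4 * q * k : ℤ) : ℝ) / (4 * q) = ang q ((i : ℝ) + 4 * q * k) by
    rw [this]; rfl]
  rw [ang_add_int q hq _ k]
  rw [Real.cos_add_int_mul_two_pi, Real.sin_add_int_mul_two_pi]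
  rfl

lemma cos_ang_le_half (q : ℕ) (hq : 1 ≤ q) (n : ℤ) (h1 : 1 ≤ n) (h2 : n ≤ 2 * q) :
    Real.cos (ang q (n : ℝ)) ≤ Real.cos (ang q 1) := by
  have hqR : (1:ℝ) ≤ (q:ℝ) := by exact_mod_cast hq
  have hpi := Real.pi_pos
  have h4q : (0:ℝ) < 4 * q := by positivity
  have hn1 : (1:ℝ) ≤ (n:ℝ) := by exact_mod_cast h1
  have hn2 : (n:ℝ) ≤ 2 * q := by exact_mod_cast h2
  apply Real.cos_le_cos_of_nonneg_of_le_pi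
  · unfold ang; positivity
  · unfold ang
    rw [div_le_iff₀ h4q]
    nlinarith
  · unfold ang
    exact div_le_div_of_nonneg_right (by nlinarith) h4q.le

lemma cos_ang_le (q : ℕ) (hq : 1 ≤ q) (k : ℤ) (h : ¬ ((4 * q : ℤ) ∣ k)) :
    Real.cos (ang q (k : ℝ)) ≤ Real.cos (ang q 1) := by
  have hq4 : (0:ℤ) < 4 * q := by positivity
  set n : ℤ := k % (4 * q) with hn
  have hn0 : 0 ≤ n := Int.emod_nonneg k (by omega)
  have hnlt : n < 4 * q := Int.emod_lt_of_pos k hq4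
  have hnne : n ≠ 0 := by
    intro h0
    exact h (Int.dvd_of_emod_eq_zero h0)
  have hk : k = n + 4 * q * (k / (4 * q)) := by
    rw [hn]; rw [Int.emod_def]; ring
  have hkR : (k:ℝ) = (n:ℝ) + 4 * q * ((k / (4 * q) : ℤ) : ℝ) := by exact_mod_cast hk
  have hang : ang q (k : ℝ) = ang q (n : ℝ) + (k / (4 * q) : ℤ) * (2 * Real.pi) := by
    have h4qR : (4 * (q:ℝ)) ≠ 0 := by positivity
    unfold ang
    rw [hkR]
    field_simp
  rw [hang, Real.cos_add_int_mul_two_pi]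
  rcases le_or_gt n (2 * q) with hle | hgt
  · exact cos_ang_le_half q hq n (by omega) hle
  · have h2 : ang q (n:ℝ) = 2 * Real.pi - ang q ((4 * q - n : ℤ) : ℝ) := by
      have h4qR : (4 * (q:ℝ)) ≠ 0 := by positivity
      unfold ang
      field_simp
      push_cast
      ring
    rw [h2, Real.cos_two_pi_sub]
    exact cos_ang_le_half q hq (4 * q - n) (by omega) (by omega)

lemma isLinearMap_dot (u : ℝ × ℝ) : IsLinearMap ℝ (fun x : ℝ × ℝ => x.1 * u.1 + x.2 * u.2) := by
  constructor
  · intro x y; simp [Prod.fst_add, Prod.snd_add]; ring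
  · intro c x; simp [Prod.smul_fst, Prod.smul_snd, smul_eq_mul]; ring

lemma interior_subset_lt (u : ℝ × ℝ) (hu : u.1 ^ 2 + u.2 ^ 2 = 1) (s : Set (ℝ × ℝ)) (c : ℝ)
    (hs : ∀ x ∈ s, x.1 * u.1 + x.2 * u.2 ≤ c) :
    ∀ x ∈ interior s, x.1 * u.1 + x.2 * u.2 < c := by
  intro x hx
  rw [mem_interior_iff_mem_nhds, Metric.mem_nhds_iff] at hx
  obtain ⟨ε, hε, hball⟩ := hx
  have hu1 : |u.1| ≤ 1 := by nlinarith [sq_nonneg u.1, sq_nonneg u.2, abs_nonneg u.1, sq_abs u.1]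
  have hu2 : |u.2| ≤ 1 := by nlinarith [sq_nonneg u.1, sq_nonneg u.2, abs_nonneg u.2, sq_abs u.2]
  set y : ℝ × ℝ := (x.1 + (ε / 2) * u.1, x.2 + (ε / 2) * u.2) with hy
  have hyball : y ∈ Metric.ball x ε := by
    rw [Metric.mem_ball, Prod.dist_eq]
    have d1 : dist y.1 x.1 = |ε / 2 * u.1| := by
      rw [hy]; simp [Real.dist_eq]; left; rw [abs_div, abs_two]
    have d2 : dist y.2 x.2 = |ε / 2 * u.2| := by
      rw [hy]; simp [Real.dist_eq]; left; rw [abs_div, abs_two]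
    rw [d1, d2, abs_mul, abs_mul, abs_of_pos (by linarith : (0:ℝ) < ε / 2)]
    have : ε / 2 * |u.1| ≤ ε / 2 * 1 := by nlinarith
    have : ε / 2 * |u.2| ≤ ε / 2 * 1 := by nlinarith
    apply max_lt <;> nlinarith
  have := hs y (hball hyball)
  rw [hy] at this
  simp only at this
  nlinarith

lemma interior_subset_gt' (u : ℝ × ℝ) (hu : u.1 ^ 2 + u.2 ^ 2 = 1) (s : Set (ℝ × ℝ)) (c : ℝ)
    (hs : ∀ x ∈ s, c ≤ x.1 * u.1 + x.2 * u.2) :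
    ∀ x ∈ interior s, c < x.1 * u.1 + x.2 * u.2 := by
  intro x hx
  rw [mem_interior_iff_mem_nhds, Metric.mem_nhds_iff] at hx
  obtain ⟨ε, hε, hball⟩ := hx
  have hu1 : |u.1| ≤ 1 := by nlinarith [sq_nonneg u.1, sq_nonneg u.2, abs_nonneg u.1, sq_abs u.1]
  have hu2 : |u.2| ≤ 1 := by nlinarith [sq_nonneg u.1, sq_nonneg u.2, abs_nonneg u.2, sq_abs u.2]
  set y : ℝ × ℝ := (x.1 - (ε / 2) * u.1, x.2 - (ε / 2) * u.2) with hy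
  have hyball : y ∈ Metric.ball x ε := by
    rw [Metric.mem_ball, Prod.dist_eq]
    have d1 : dist y.1 x.1 = |ε / 2 * u.1| := by
      rw [hy]; simp [Real.dist_eq]
      rw [abs_of_pos hε]; left; rw [abs_of_pos (by linarith : (0:ℝ) < ε / 2)]
    have d2 : dist y.2 x.2 = |ε / 2 * u.2| := by
      rw [hy]; simp [Real.dist_eq]
      rw [abs_of_pos hε]; left; rw [abs_of_pos (by linarith : (0:ℝ) < ε / 2)]
    rw [d1, d2, abs_mul, abs_mul, abs_of_pos (by linarith : (0:ℝ) < ε / 2)]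
    have : ε / 2 * |u.1| ≤ ε / 2 * 1 := by nlinarith
    have : ε / 2 * |u.2| ≤ ε / 2 * 1 := by nlinarith
    apply max_lt <;> nlinarith
  have := hs y (hball hyball)
  rw [hy] at this
  simp only at this
  nlinarith

lemma gonVertex_norm' (q : ℕ) (i : ℤ) :
    (gonVertex q i).1 ^ 2 + (gonVertex q i).2 ^ 2 = 1 := by
  simp [gonVertex]

lemma interior_subset_gt (q : ℕ) (i : ℤ) (s : Set (ℝ × ℝ))
    (hs : ∀ x ∈ s, cc q ≤ dotp q i x) :
    ∀ x ∈ interior s, cc q < dotp q i x := by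
  intro x hx
  exact interior_subset_gt' (gonVertex q i) (gonVertex_norm' q i) s (cc q)
    (fun y hy => hs y hy) x hx

lemma gonVertex_norm (q : ℕ) (i : ℤ) :
    (gonVertex q i).1 ^ 2 + (gonVertex q i).2 ^ 2 = 1 := by
  simpa [gonVertex] using Real.cos_sq_add_sin_sq (2 * Real.pi * (i : ℝ) / (4 * q))

lemma dotp_vertex_le (q : ℕ) (hq : 1 ≤ q) (i j : ℤ) (h : ¬ ((4 * q : ℤ) ∣ (j - i))) :
    dotp q i (gonVertex q j) ≤ cc q := by
  rw [dotp_gonVertex]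
  exact cos_ang_le q hq (j - i) h

lemma hull_subset_le (q : ℕ) (hq : 1 ≤ q) (i : ℤ) (s : Set ℤ)
    (h : ∀ j ∈ s, ¬ ((4 * q : ℤ) ∣ (j - i))) :
    convexHull ℝ (gonVertex q '' s) ⊆ {x : ℝ × ℝ | dotp q i x ≤ cc q} := by
  apply convexHull_min
  · rintro x ⟨j, hj, rfl⟩
    exact dotp_vertex_le q hq i j (h j hj)
  · exact convex_halfSpace_le (isLinearMap_dot (gonVertex q i)) (cc q)

lemma ear_subset_ge (q : ℕ) (hq : 1 ≤ q) (i : ℤ) :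
    ear q i ⊆ {x : ℝ × ℝ | cc q ≤ dotp q i x} := by
  apply convexHull_min
  · have hm1 : dotp q i (gonVertex q (i - 1)) = cc q := by
      rw [dotp_gonVertex]
      rw [show (i - 1 - i : ℤ) = -1 by ring]
      rw [show (((-1 : ℤ) : ℝ)) = -(1:ℝ) by push_cast; ring]
      rw [show ang q (-1) = -(ang q 1) by unfold ang; ring, Real.cos_neg]
      rfl
    have hp1 : dotp q i (gonVertex q (i + 1)) = cc q := by
      rw [dotp_gonVertex]
      rw [show (i + 1 - i : ℤ) = 1 by ring]
      norm_num
      rfl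
    have h0 : dotp q i (gonVertex q i) = 1 := by
      rw [dotp_gonVertex]
      simp [ang]
    intro x hx
    rcases hx with rfl | rfl | rfl
    · exact le_of_eq hm1.symm
    · rw [mem_setOf_eq, h0]; exact Real.cos_le_one _
    · exact le_of_eq hp1.symm
  · exact convex_halfSpace_ge (isLinearMap_dot (gonVertex q i)) (cc q)

noncomputable def rotL (θ : ℝ) : (ℝ × ℝ) →ₗ[ℝ] (ℝ × ℝ) :=
  Matrix.toLin (Module.Basis.finTwoProd ℝ) (Module.Basis.finTwoProd ℝ)
    !![Real.cos θ, -Real.sin θ; Real.sin θ, Real.cos θ]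

lemma rotL_det (θ : ℝ) : LinearMap.det (rotL θ) = 1 := by
  rw [rotL, LinearMap.det_toLin, Matrix.det_fin_two_of]
  nlinarith [Real.sin_sq_add_cos_sq θ]

lemma rotL_gonVertex (q : ℕ) (i k : ℤ) :
    rotL (2 * Real.pi * (i : ℝ) / (4 * q)) (gonVertex q k) = gonVertex q (k + i) := by
  rw [rotL, Matrix.toLin_finTwoProd_apply]
  set a := 2 * Real.pi * (i : ℝ) / (4 * q)
  set b := 2 * Real.pi * (k : ℝ) / (4 * q)
  have hab : 2 * Real.pi * ((k + i : ℤ) : ℝ) / (4 * q) = b + a := by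
    push_cast [a, b]; ring
  simp only [gonVertex, hab, Real.cos_add, Real.sin_add]
  exact Prod.ext (by ring) (by ring)

lemma ear_rot (q : ℕ) (i : ℤ) : ear q i = rotL (2 * Real.pi * (i : ℝ) / (4 * q)) '' (ear q 0) := by
  rw [ear, ear, (rotL _).image_convexHull]
  congr 1
  rw [Set.image_insert_eq, Set.image_insert_eq, Set.image_singleton]
  rw [rotL_gonVertex, rotL_gonVertex, rotL_gonVertex]
  rw [show ((0:ℤ) - 1 + i) = i - 1 by ring, show ((0:ℤ) + 1 + i) = i + 1 by ring,
    show (0:ℤ) + i = i by ring]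

lemma volume_ear (q : ℕ) (i : ℤ) : volume (ear q i) = volume (ear q 0) := by
  rw [ear_rot q i, Measure.addHaar_image_linearMap, rotL_det]
  norm_num

lemma combin (q : ℕ) (hq : 1 ≤ q) (B : Finset ℤ) (hB : B ⊆ Finset.Ico (0:ℤ) (4*q))
    (hBcard : B.card ≤ 2*q) :
    ∃ Z' : Finset ℤ, Z' ⊆ Finset.Ico (0:ℤ) (4*q) ∧ (∀ i ∈ Z', i ∉ B) ∧ Z'.card = q ∧
      ∀ i ∈ Z', ∀ j ∈ Z', ∃ m : ℤ, i - j = 2 * m := by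
  classical
  set E : Finset ℤ := (Finset.Ico (0:ℤ) (2*q)).image (fun k => 2*k) with hE
  set O : Finset ℤ := (Finset.Ico (0:ℤ) (2*q)).image (fun k => 2*k+1) with hO
  have hinj1 : Function.Injective (fun k : ℤ => 2*k) := by intro a b h; dsimp at h; omega
  have hinj2 : Function.Injective (fun k : ℤ => 2*k+1) := by intro a b h; dsimp at h; omega
  have hcardE : E.card = 2*q := by
    rw [hE, Finset.card_image_of_injective _ hinj1, Int.card_Ico]; omega
  have hcardO : O.card = 2*q := by
    rw [hO, Finset.card_image_of_injective _ hinj2, Int.card_Ico]; omega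
  have hEsub : E ⊆ Finset.Ico (0:ℤ) (4*q) := by
    intro x hx
    simp only [hE, Finset.mem_image, Finset.mem_Ico] at hx ⊢
    obtain ⟨k, hk, rfl⟩ := hx; omega
  have hOsub : O ⊆ Finset.Ico (0:ℤ) (4*q) := by
    intro x hx
    simp only [hO, Finset.mem_image, Finset.mem_Ico] at hx ⊢
    obtain ⟨k, hk, rfl⟩ := hx; omega
  have hdisj : Disjoint E O := by
    rw [Finset.disjoint_left]
    intro x hx1 hx2
    simp only [hE, hO, Finset.mem_image] at hx1 hx2
    obtain ⟨a, _, rfl⟩ := hx1; obtain ⟨b, _, h⟩ := hx2; omega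
  have hEO : E ∪ O = Finset.Ico (0:ℤ) (4*q) := by
    apply Finset.eq_of_subset_of_card_le (Finset.union_subset hEsub hOsub)
    rw [Finset.card_union_of_disjoint hdisj, hcardE, hcardO, Int.card_Ico]
    omega
  have hbig : 2*q ≤ (E \ B).card + (O \ B).card := by
    have h1 : (E \ B) ∪ (O \ B) = (E ∪ O) \ B := (Finset.union_sdiff_distrib E O B).symm
    have h2 : (Finset.Ico (0:ℤ) (4*q)).card - B.card ≤ ((E ∪ O) \ B).card := by
      rw [hEO]; exact Finset.le_card_sdiff B _
    have h3 : (Finset.Ico (0:ℤ) (4*q)).card = 4*q := by rw [Int.card_Ico]; omega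
    calc 2*q ≤ (Finset.Ico (0:ℤ) (4*q)).card - B.card := by omega
    _ ≤ ((E ∪ O) \ B).card := h2
    _ = ((E \ B) ∪ (O \ B)).card := by rw [h1]
    _ ≤ (E \ B).card + (O \ B).card := Finset.card_union_le _ _
  have key : ∀ S : Finset ℤ, S ⊆ Finset.Ico (0:ℤ) (4*q) →
      (∀ i ∈ S, ∀ j ∈ S, ∃ m : ℤ, i - j = 2 * m) → q ≤ (S \ B).card →
      ∃ Z' : Finset ℤ, Z' ⊆ Finset.Ico (0:ℤ) (4*q) ∧ (∀ i ∈ Z', i ∉ B) ∧ Z'.card = q ∧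
        ∀ i ∈ Z', ∀ j ∈ Z', ∃ m : ℤ, i - j = 2 * m := by
    intro S hS hpar hq'
    obtain ⟨Z', hZ'sub, hZ'card⟩ := Finset.exists_subset_card_eq hq'
    refine ⟨Z', ?_, ?_, hZ'card, ?_⟩
    · exact fun x hx => hS (Finset.mem_sdiff.1 (hZ'sub hx)).1
    · exact fun x hx => (Finset.mem_sdiff.1 (hZ'sub hx)).2
    · intro i hi j hj
      exact hpar i (Finset.mem_sdiff.1 (hZ'sub hi)).1 j (Finset.mem_sdiff.1 (hZ'sub hj)).1
  have hparE : ∀ i ∈ E, ∀ j ∈ E, ∃ m : ℤ, i - j = 2 * m := by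
    intro i hi j hj
    simp only [hE, Finset.mem_image] at hi hj
    obtain ⟨a, _, rfl⟩ := hi; obtain ⟨b, _, rfl⟩ := hj; exact ⟨a - b, by ring⟩
  have hparO : ∀ i ∈ O, ∀ j ∈ O, ∃ m : ℤ, i - j = 2 * m := by
    intro i hi j hj
    simp only [hO, Finset.mem_image] at hi hj
    obtain ⟨a, _, rfl⟩ := hi; obtain ⟨b, _, rfl⟩ := hj; exact ⟨a - b, by ring⟩
  rcases le_or_gt (q:ℕ) (E \ B).card with h | h
  · exact key E hEsub hparE h
  · exact key O hOsub hparO (by omega)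

lemma gonVertex_mem_image (q : ℕ) (hq : 1 ≤ q) (m : ℤ) :
    gonVertex q m ∈ gonVertex q '' (Set.Ico (0 : ℤ) (4 * q)) := by
  have hq4 : (0:ℤ) < 4 * q := by positivity
  refine ⟨m % (4 * q), ⟨Int.emod_nonneg m (by omega), Int.emod_lt_of_pos m hq4⟩, ?_⟩
  have : gonVertex q (m % (4 * q) + 4 * q * (m / (4 * q))) = gonVertex q (m % (4 * q)) :=
    gonVertex_add_period q hq _ _
  rw [← this]
  congr 1
  rw [Int.emod_def]; ring

lemma ear_subset_K (q : ℕ) (hq : 1 ≤ q) (i : ℤ) :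
    ear q i ⊆ convexHull ℝ (gonVertex q '' (Set.Ico (0 : ℤ) (4 * q))) := by
  apply convexHull_min
  · intro x hx
    rcases hx with rfl | rfl | rfl <;>
      exact subset_convexHull ℝ _ (gonVertex_mem_image q hq _)
  · exact convex_convexHull ℝ _

end S18

open S18
/-- From any `B ⊆ Z` with `|B| ≤ 2q` among the vertices of a regular `4q`-gon, one can choose
`q` pairwise non-adjacent vertices outside `B`, whose ear triangles are pairwise
interior-disjoint and disjoint from the interior of `conv(B)`; consequently
`area(conv(Z) \ conv(B)) ≥ q·η` where `η` is the common ear area. -/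
theorem stmt18 (q : ℕ) (hq : 1 ≤ q) (B : Finset ℤ)
    (hB : B ⊆ Finset.Ico (0 : ℤ) (4 * q)) (hBcard : B.card ≤ 2 * q) :
    ∃ Z' : Finset ℤ, Z' ⊆ Finset.Ico (0 : ℤ) (4 * q) ∧ (∀ i ∈ Z', i ∉ B) ∧ Z'.card = q ∧
      (∀ i ∈ Z', ∀ j ∈ Z', i ≠ j → |i - j| ≠ 1 ∧ |i - j| ≠ 4 * q - 1) ∧
      (∀ i ∈ Z', ∀ j ∈ Z', i ≠ j → interior (ear q i) ∩ interior (ear q j) = ∅) ∧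
      (∀ i ∈ Z', ear q i ∩ interior (convexHull ℝ (gonVertex q '' (B : Set ℤ))) = ∅) ∧
      (q : ℝ≥0∞) * volume (ear q 0) ≤
        volume (convexHull ℝ (gonVertex q '' (Set.Ico (0 : ℤ) (4 * q))) \
          convexHull ℝ (gonVertex q '' (B : Set ℤ))) := by
  classical
  obtain ⟨Z', hZsub, hZB, hZcard, hZpar⟩ := combin q hq B hB hBcard
  have hmem : ∀ i ∈ Z', (0:ℤ) ≤ i ∧ i < 4 * q := by
    intro i hi
    have := hZsub hi
    rw [Finset.mem_Ico] at this
    exact this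
  -- non-adjacency
  have hnonadj : ∀ i ∈ Z', ∀ j ∈ Z', i ≠ j → |i - j| ≠ 1 ∧ |i - j| ≠ 4 * q - 1 := by
    intro i hi j hj hij
    obtain ⟨m, hm⟩ := hZpar i hi j hj
    constructor
    · intro h1
      rcases (abs_eq (by norm_num : (0:ℤ) ≤ 1)).mp h1 with h | h <;> omega
    · intro h1
      have hq4 : (0:ℤ) ≤ 4 * q - 1 := by omega
      rcases (abs_eq hq4).mp h1 with h | h <;> omega
  -- divisibility facts
  have hdvd : ∀ i ∈ Z', ∀ j ∈ Z', i ≠ j → ∀ e : ℤ, e = -1 ∨ e = 0 ∨ e = 1 →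
      ¬ ((4 * q : ℤ) ∣ (j + e - i)) := by
    intro i hi j hj hij e he hdvd
    obtain ⟨hi0, hi1⟩ := hmem i hi
    obtain ⟨hj0, hj1⟩ := hmem j hj
    obtain ⟨m, hm⟩ := hZpar i hi j hj
    have hqz : (1:ℤ) ≤ q := by exact_mod_cast hq
    have hne : j + e - i ≠ 0 := by rcases he with rfl | rfl | rfl <;> omega
    have hle : (4 * q : ℤ) ≤ |j + e - i| :=
      Int.le_of_dvd (abs_pos.mpr hne) ((dvd_abs _ _).mpr hdvd)
    rcases abs_cases (j + e - i) with ⟨ha, _⟩ | ⟨ha, _⟩ <;>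
      rcases he with rfl | rfl | rfl <;> omega
  -- interiors of ears
  have hear_int : ∀ i ∈ Z', ∀ x ∈ interior (ear q i), cc q < dotp q i x := by
    intro i hi
    exact interior_subset_gt q i (ear q i) (fun x hx => ear_subset_ge q hq i hx)
  have hear_other : ∀ i ∈ Z', ∀ j ∈ Z', i ≠ j → ear q j ⊆ {x : ℝ × ℝ | dotp q i x ≤ cc q} := by
    intro i hi j hj hij
    apply convexHull_min
    · intro x hx
      rcases hx with rfl | rfl | rfl
      · exact dotp_vertex_le q hq i (j - 1) (by
          have := hdvd i hi j hj hij (-1) (Or.inl rfl)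
          rwa [show j + -1 - i = j - 1 - i from by ring] at this)
      · exact dotp_vertex_le q hq i j (by
          have := hdvd i hi j hj hij 0 (Or.inr (Or.inl rfl))
          rwa [show j + 0 - i = j - i from by ring] at this)
      · exact dotp_vertex_le q hq i (j + 1) (by
          have := hdvd i hi j hj hij 1 (Or.inr (Or.inr rfl))
          rwa [show j + 1 - i = j + 1 - i from rfl] at this)
    · exact convex_halfSpace_le (isLinearMap_dot (gonVertex q i)) (cc q)
  have hint_disj : ∀ i ∈ Z', ∀ j ∈ Z', i ≠ j →
      interior (ear q i) ∩ interior (ear q j) = ∅ := by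
    intro i hi j hj hij
    rw [Set.eq_empty_iff_forall_notMem]
    rintro x ⟨hxi, hxj⟩
    have h1 := hear_int i hi x hxi
    have h2 := hear_other i hi j hj hij (interior_subset hxj)
    exact absurd h2 (not_le.mpr h1)
  -- ear vs conv B
  set C : Set (ℝ × ℝ) := convexHull ℝ (gonVertex q '' (B : Set ℤ)) with hC
  have hCsub : ∀ i ∈ Z', C ⊆ {x : ℝ × ℝ | dotp q i x ≤ cc q} := by
    intro i hi
    apply hull_subset_le q hq i
    intro j hj hdv
    obtain ⟨hi0, hi1⟩ := hmem i hi
    have hjB : j ∈ Finset.Ico (0:ℤ) (4*q) := hB hj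
    rw [Finset.mem_Ico] at hjB
    have hne : j ≠ i := fun h => hZB i hi (h ▸ hj)
    have hqz : (1:ℤ) ≤ q := by exact_mod_cast hq
    have hne2 : j - i ≠ 0 := by omega
    have hle : (4 * q : ℤ) ≤ |j - i| :=
      Int.le_of_dvd (abs_pos.mpr hne2) ((dvd_abs _ _).mpr hdv)
    rcases abs_cases (j - i) with ⟨ha, _⟩ | ⟨ha, _⟩ <;> omega
  have hearB : ∀ i ∈ Z', ear q i ∩ interior C = ∅ := by
    intro i hi
    rw [Set.eq_empty_iff_forall_notMem]
    rintro x ⟨hx1, hx2⟩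
    have h1 : cc q ≤ dotp q i x := ear_subset_ge q hq i hx1
    set u : ℝ × ℝ := gonVertex q i
    have := interior_subset_lt u (gonVertex_norm q i) C (cc q) (fun y hy => hCsub i hi hy) x hx2
    simp only [dotp] at h1 this
    linarith
  -- volume part
  have hCclosed : IsClosed C := by
    apply IsCompact.isClosed
    apply Set.Finite.isCompact_convexHull
    exact (B : Set ℤ).toFinite.image _
  have hCfrontier : volume (frontier C) = 0 :=
    (convex_convexHull ℝ _).addHaar_frontier volume
  have hear_closed : ∀ i : ℤ, IsClosed (ear q i) := by
    intro i
    apply IsCompact.isClosed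
    apply Set.Finite.isCompact_convexHull
    exact (Set.finite_singleton _).insert _ |>.insert _
  have hear_frontier : ∀ i : ℤ, volume (frontier (ear q i)) = 0 := fun i =>
    (convex_convexHull ℝ _).addHaar_frontier volume
  -- volume of interior = volume of ear
  have hvol_int : ∀ i : ℤ, volume (interior (ear q i)) = volume (ear q i) := by
    intro i
    apply le_antisymm (measure_mono interior_subset)
    calc volume (ear q i) ≤ volume (interior (ear q i) ∪ frontier (ear q i)) := by
          apply measure_mono
          rw [(hear_closed i).frontier_eq]
          intro x hx
          by_cases h : x ∈ interior (ear q i)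
          · exact Or.inl h
          · exact Or.inr ⟨hx, h⟩
    _ ≤ volume (interior (ear q i)) + volume (frontier (ear q i)) := measure_union_le _ _
    _ = volume (interior (ear q i)) := by rw [hear_frontier i, add_zero]
  -- each piece
  have hpiece : ∀ i ∈ Z', volume (interior (ear q i) \ C) = volume (ear q 0) := by
    intro i hi
    have hnull : volume (interior (ear q i) ∩ C) = 0 := by
      apply measure_mono_null ?_ hCfrontier
      intro x ⟨hx1, hx2⟩
      rw [frontier, hCclosed.closure_eq]
      refine ⟨hx2, ?_⟩
      intro hx3
      have : x ∈ ear q i ∩ interior C := ⟨interior_subset hx1, hx3⟩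
      rw [hearB i hi] at this
      exact this
    rw [measure_diff_null' hnull, hvol_int i, volume_ear q i]
  -- disjointness of pieces
  have hdisj_pieces : (↑Z' : Set ℤ).PairwiseDisjoint (fun i => interior (ear q i) \ C) := by
    intro i hi j hj hij
    rw [Function.onFun, Set.disjoint_left]
    intro x hx1 hx2
    have : x ∈ interior (ear q i) ∩ interior (ear q j) := ⟨hx1.1, hx2.1⟩
    rw [hint_disj i (by exact_mod_cast hi) j (by exact_mod_cast hj) hij] at this
    exact this
  have hmeas : ∀ i ∈ Z', MeasurableSet (interior (ear q i) \ C) := fun i _ =>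
    isOpen_interior.measurableSet.diff hCclosed.measurableSet
  have hunion_sub : (⋃ i ∈ Z', interior (ear q i) \ C) ⊆
      convexHull ℝ (gonVertex q '' (Set.Ico (0 : ℤ) (4 * q))) \ C := by
    apply Set.iUnion₂_subset
    intro i hi
    intro x hx
    exact ⟨ear_subset_K q hq i (interior_subset hx.1), hx.2⟩
  refine ⟨Z', hZsub, hZB, hZcard, hnonadj, hint_disj, hearB, ?_⟩
  calc (q : ℝ≥0∞) * volume (ear q 0) = ∑ i ∈ Z', volume (interior (ear q i) \ C) := by
        rw [Finset.sum_congr rfl hpiece, Finset.sum_const, hZcard, nsmul_eq_mul]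
  _ = volume (⋃ i ∈ Z', interior (ear q i) \ C) :=
      (measure_biUnion_finset hdisj_pieces hmeas).symm
  _ ≤ volume (convexHull ℝ (gonVertex q '' (Set.Ico (0 : ℤ) (4 * q))) \ C) :=
      measure_mono hunion_sub
end
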